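/- arXiv:0712.2308 — 5 statements merged into one kernel-verified Lean document; each statement's English description precedes it below -/
import Mathlib

section
/- Let J ⊂ I be monomial ideals of S = K[x_1,…,x_n] and g ∈ ℕ^n with a ≤ g for all a with x^a ∈ I \ J. Let 𝒫 : P^g_{I/J} = ⋃_{i=1}^r [c_i,d_i] be a partition of the characteristic poset into intervals such that for every j the union ⋃_{i=1}^j [c_i,d_i] is a poset ideal of P^g_{I/J}. Then the associated Stanley decomposition D(𝒫) of I/J is induced by a prime filtration; equivalently, the Stanley spaces of D(𝒫) can be ordered so that every partial sum of the decomposition is a ℤ^n-graded S-submodule of I/J. -/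
open MvPolynomial

namespace StanleyPaper

variable {n : ℕ} {K : Type} [Field K]

/-- A monomial ideal: an ideal generated by monomials. -/
def IsMonomialIdeal (I : Ideal (MvPolynomial (Fin n) K)) : Prop :=
  ∃ A : Set (Fin n →₀ ℕ),
    I = Ideal.span ((fun a => (monomial a (1 : K) : MvPolynomial (Fin n) K)) '' A)

/-- The set of exponent vectors `a` with `x^a ∈ I \ J`. -/
def expSet (I J : Ideal (MvPolynomial (Fin n) K)) : Set (Fin n →₀ ℕ) :=
  {a | (monomial a (1 : K) : MvPolynomial (Fin n) K) ∈ I ∧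
    (monomial a (1 : K) : MvPolynomial (Fin n) K) ∉ J}

/-- The characteristic poset `P^g_{I/J}` of `I/J` with respect to `g`. -/
def charPoset (I J : Ideal (MvPolynomial (Fin n) K)) (g : Fin n →₀ ℕ) : Set (Fin n →₀ ℕ) :=
  {a | a ∈ expSet I J ∧ a ≤ g}

/-- `Z_b = { x_j : b(j) = g(j) }`. -/
def Zset (g b : Fin n →₀ ℕ) : Finset (Fin n) :=
  Finset.univ.filter fun j => b j = g j

/-- `ρ(b) = |Z_b|`. -/
def rho (g b : Fin n →₀ ℕ) : ℕ := (Zset g b).card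

/-- The Stanley space `x^c K[Z]`, as a `K`-subspace of `S = K[x_1,…,x_n]`. -/
noncomputable def stanleySpace (K : Type) [Field K] (c : Fin n →₀ ℕ) (Z : Finset (Fin n)) :
    Submodule K (MvPolynomial (Fin n) K) :=
  Submodule.span K
    ((fun a => (monomial a (1 : K) : MvPolynomial (Fin n) K)) ''
      {a | c ≤ a ∧ ∀ j ∉ Z, a j = c j})

/-- The `K`-span of the monomials of `I \ J`; this is the standard model for the
`ℤⁿ`-graded `K`-vector space `I/J`. -/
noncomputable def quotSpace (I J : Ideal (MvPolynomial (Fin n) K)) : Submodule K (MvPolynomial (Fin n) K) :=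
  Submodule.span K ((fun a => (monomial a (1 : K) : MvPolynomial (Fin n) K)) '' expSet I J)

/-- The `K`-span of the monomials of `J`. -/
noncomputable def Jspan (J : Ideal (MvPolynomial (Fin n) K)) : Submodule K (MvPolynomial (Fin n) K) :=
  Submodule.span K ((fun a => (monomial a (1 : K) : MvPolynomial (Fin n) K)) ''
    {a | (monomial a (1 : K) : MvPolynomial (Fin n) K) ∈ J})

/-- A (graded) `K`-subspace `W` of the model of `I/J` corresponds to an (`ℤⁿ`-graded)
`S`-submodule of `I/J` iff it is stable under multiplication by the variables, modulo `J`. -/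
def IsSSubmoduleModJ (J : Ideal (MvPolynomial (Fin n) K))
    (W : Submodule K (MvPolynomial (Fin n) K)) : Prop :=
  ∀ j : Fin n, ∀ p ∈ W, (X j : MvPolynomial (Fin n) K) * p ∈ W ⊔ Jspan J

/-- A partition of a (finite) subposet `P` of `ℕⁿ` into intervals `[c i, d i]`. -/
structure IntervalPartition (P : Set (Fin n →₀ ℕ)) where
  r : ℕ
  c : Fin r → (Fin n →₀ ℕ)
  d : Fin r → (Fin n →₀ ℕ)
  le : ∀ i, c i ≤ d i
  mem_c : ∀ i, c i ∈ P
  mem_d : ∀ i, d i ∈ P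
  sub : ∀ i, Set.Icc (c i) (d i) ⊆ P
  cover : ∀ a ∈ P, ∃ i, a ∈ Set.Icc (c i) (d i)
  disj : ∀ i j, i ≠ j → Disjoint (Set.Icc (c i) (d i)) (Set.Icc (c j) (d j))

/-- The inner index set of the `i`-th interval: all `c' ∈ [c i, d i]` with
`c'(j) = c i (j)` for all `j` with `x_j ∈ Z_{d i}`. -/
def IntervalPartition.innerSet {P : Set (Fin n →₀ ℕ)} (Pt : IntervalPartition P)
    (g : Fin n →₀ ℕ) (i : Fin Pt.r) : Set (Fin n →₀ ℕ) :=
  {c' | c' ∈ Set.Icc (Pt.c i) (Pt.d i) ∧ ∀ j ∈ Zset g (Pt.d i), c' j = Pt.c i j}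

/-- The index set of the Stanley decomposition `D(Pt)` associated to a partition `Pt`. -/
def IntervalPartition.DPIdx {P : Set (Fin n →₀ ℕ)} (Pt : IntervalPartition P)
    (g : Fin n →₀ ℕ) : Type :=
  Σ i : Fin Pt.r, Pt.innerSet g i

/-- The family of Stanley spaces of the decomposition `D(Pt)`:
the summand at `(i, c')` is `x^{c'} K[Z_{d i}]`. -/
noncomputable def IntervalPartition.DPfam (K : Type) [Field K] {P : Set (Fin n →₀ ℕ)}
    (Pt : IntervalPartition P) (g : Fin n →₀ ℕ) (x : Pt.DPIdx g) :
    Submodule K (MvPolynomial (Fin n) K) :=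
  stanleySpace K (x.2 : Fin n →₀ ℕ) (Zset g (Pt.d x.1))

/-- `sdepth D(Pt) = min { ρ(d i) }`. -/
noncomputable def IntervalPartition.sdepthDP {P : Set (Fin n →₀ ℕ)} (Pt : IntervalPartition P)
    (g : Fin n →₀ ℕ) : ℕ :=
  sInf {k | ∃ i : Fin Pt.r, k = rho g (Pt.d i)}

/-- The property that the partial unions `⋃_{i < t} [c i, d i]` are poset ideals
of the characteristic poset, for all `t`. -/
def IntervalPartition.InitialsArePosetIdeals {P : Set (Fin n →₀ ℕ)}
    (Pt : IntervalPartition P) : Prop :=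
  ∀ t : ℕ, ∀ a b : Fin n →₀ ℕ,
    (∃ i : Fin Pt.r, (i : ℕ) < t ∧ a ∈ Set.Icc (Pt.c i) (Pt.d i)) → b ∈ P → b ≤ a →
      ∃ i : Fin Pt.r, (i : ℕ) < t ∧ b ∈ Set.Icc (Pt.c i) (Pt.d i)

/-- The family `(x^{u i} K[Z i])_{i : ι}` is a Stanley decomposition of `I/J`:
each Stanley space is a free `K[Z i]`-module (its natural monomial basis is
`K`-linearly independent), the spaces are independent, and they sum to `I/J`. -/
def IsStanleyDecompOf (I J : Ideal (MvPolynomial (Fin n) K)) {ι : Type}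
    (u : ι → (Fin n →₀ ℕ)) (Z : ι → Finset (Fin n)) : Prop :=
  (∀ i, LinearIndependent K fun e : {e : Fin n →₀ ℕ // ∀ j ∉ Z i, e j = 0} =>
    (monomial (u i + (e : Fin n →₀ ℕ)) (1 : K) : MvPolynomial (Fin n) K)) ∧
  iSupIndep (fun i => stanleySpace K (u i) (Z i)) ∧
  (⨆ i, stanleySpace K (u i) (Z i)) = quotSpace I J

/-- A (finite) Stanley decomposition of `I/J`. -/
structure StanleyDec (I J : Ideal (MvPolynomial (Fin n) K)) where
  m : ℕ
  u : Fin m → (Fin n →₀ ℕ)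
  Z : Fin m → Finset (Fin n)
  isDecomp : IsStanleyDecompOf I J u Z

/-- The Stanley depth of a Stanley decomposition: `min |Z i|`. -/
noncomputable def StanleyDec.sdepth {I J : Ideal (MvPolynomial (Fin n) K)} (D : StanleyDec I J) : ℕ :=
  sInf {k | ∃ i, k = (D.Z i).card}

/-- The Stanley depth of `I/J`. -/
noncomputable def sdepthQ (I J : Ideal (MvPolynomial (Fin n) K)) : ℕ :=
  sSup {k | ∃ D : StanleyDec I J, k = D.sdepth}

/-- A Stanley decomposition of `I/J` is induced by a prime filtration iff its Stanley
spaces can be ordered so that all partial sums are (`ℤⁿ`-graded) `S`-submodules of `I/J`. -/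
def StanleyDec.InducedByPrimeFiltration {I J : Ideal (MvPolynomial (Fin n) K)}
    (D : StanleyDec I J) : Prop :=
  ∃ σ : Equiv.Perm (Fin D.m), ∀ t : ℕ,
    IsSSubmoduleModJ J
      (⨆ i : Fin D.m, ⨆ _ : (σ i : ℕ) < t, stanleySpace K (D.u i) (D.Z i))

/-- `D(Pt)` is induced by a prime filtration: its Stanley spaces can be ordered so that
all partial sums are (`ℤⁿ`-graded) `S`-submodules of `I/J`. -/
def IntervalPartition.DPInducedByPrimeFiltration (J : Ideal (MvPolynomial (Fin n) K))
    {P : Set (Fin n →₀ ℕ)} (Pt : IntervalPartition P) (g : Fin n →₀ ℕ) : Prop :=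
  ∃ (N : ℕ) (e : Fin N → Pt.DPIdx g), Function.Bijective e ∧ ∀ t : ℕ,
    IsSSubmoduleModJ J (⨆ s : Fin N, ⨆ _ : (s : ℕ) < t, Pt.DPfam K g (e s))

/-- A monomial prime ideal: an ideal generated by a subset of the variables. -/
def IsMonomialPrime (P : Ideal (MvPolynomial (Fin n) K)) : Prop :=
  ∃ V : Finset (Fin n), P = Ideal.span ((fun j => (X j : MvPolynomial (Fin n) K)) '' ↑V)

/-- A prime filtration of `I/J` (in the monomial model): a chain
`0 = W 0 ⊂ W 1 ⊂ ⋯ ⊂ W m = I/J` of `ℤⁿ`-graded `S`-submodules of `I/J` such that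
`W (i+1) / W i ≅ (S/P i)(-a i)` with `P i` a monomial prime ideal. -/
structure QPrimeFiltration (I J : Ideal (MvPolynomial (Fin n) K)) where
  m : ℕ
  W : Fin (m + 1) → Submodule K (MvPolynomial (Fin n) K)
  a : Fin m → (Fin n →₀ ℕ)
  P : Fin m → Ideal (MvPolynomial (Fin n) K)
  bot : W 0 = ⊥
  top : W (Fin.last m) = quotSpace I J
  graded : ∀ i, ∃ E : Set (Fin n →₀ ℕ),
    W i = Submodule.span K ((fun a => (monomial a (1 : K) : MvPolynomial (Fin n) K)) '' E)
  stable : ∀ i, IsSSubmoduleModJ J (W i)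
  amem : ∀ i, a i ∈ expSet I J
  gen : ∀ i, W i.succ = W i.castSucc ⊔
    Submodule.span K ((fun e => (monomial e (1 : K) : MvPolynomial (Fin n) K)) ''
      {e | a i ≤ e ∧ (monomial e (1 : K) : MvPolynomial (Fin n) K) ∉ J})
  ann : ∀ i, ∀ s : MvPolynomial (Fin n) K,
    s * monomial (a i) (1 : K) ∈ W i.castSucc ⊔ Jspan J ↔ s ∈ P i
  isPrime : ∀ i, IsMonomialPrime (P i)

/-- `fdepth ℱ = min { dim S/P : P ∈ supp ℱ }`. -/
noncomputable def QPrimeFiltration.fdepth {I J : Ideal (MvPolynomial (Fin n) K)}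
    (F : QPrimeFiltration I J) : WithBot ℕ∞ :=
  ⨅ i : Fin F.m, ringKrullDim (MvPolynomial (Fin n) K ⧸ F.P i)

/-- `fdepth I/J = max { fdepth ℱ : ℱ a prime filtration of I/J }`. -/
noncomputable def fdepthQ (I J : Ideal (MvPolynomial (Fin n) K)) : WithBot ℕ∞ :=
  ⨆ F : QPrimeFiltration I J, F.fdepth

/-- The graded maximal ideal `(x_1, …, x_n)`. -/
noncomputable def maxIdeal (n : ℕ) (K : Type) [Field K] : Ideal (MvPolynomial (Fin n) K) :=
  Ideal.span (Set.range (X : Fin n → MvPolynomial (Fin n) K))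

/-- The depth of a module over `S = K[x_1,…,x_n]` with respect to the graded maximal
ideal: the maximal length of an `M`-regular sequence of elements of `(x_1,…,x_n)`. -/
noncomputable def moduleDepth (n : ℕ) (K : Type) [Field K] (M : Type)
    [AddCommGroup M] [Module (MvPolynomial (Fin n) K) M] : ℕ :=
  sSup {r | ∃ rs : List (MvPolynomial (Fin n) K), rs.length = r ∧
    (∀ s ∈ rs, s ∈ maxIdeal n K) ∧ RingTheory.Sequence.IsRegular M rs}

/-- The `S`-module `I/J`. -/
abbrev QuotMod (I J : Ideal (MvPolynomial (Fin n) K)) :=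
  ↥I ⧸ (Submodule.comap I.subtype J)



def degw {n : ℕ} (v : Fin n →₀ ℕ) : ℕ := ∑ l, v l

lemma degw_mono {n : ℕ} {v w : Fin n →₀ ℕ} (h : v ≤ w) : degw v ≤ degw w :=
  Finset.sum_le_sum fun l _ => h l

lemma degw_add_single {n : ℕ} (v : Fin n →₀ ℕ) (j : Fin n) :
    degw (v + Finsupp.single j 1) = degw v + 1 := by
  unfold degw
  simp [Finsupp.add_apply, Finset.sum_add_distrib, Finsupp.single_apply]

lemma X_mul_monomial' (j : Fin n) (a : Fin n →₀ ℕ) :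
    (X j : MvPolynomial (Fin n) K) * monomial a 1 = monomial (a + Finsupp.single j 1) 1 := by
  rw [X, monomial_mul, one_mul, add_comm]

lemma monomial_mem_of_le {I : Ideal (MvPolynomial (Fin n) K)} {c a : Fin n →₀ ℕ}
    (hc : monomial c (1 : K) ∈ I) (hle : c ≤ a) : monomial a (1 : K) ∈ I := by
  have : (monomial (a - c) (1 : K)) * monomial c (1 : K) = monomial a 1 := by
    rw [monomial_mul, one_mul, tsub_add_cancel_of_le hle]
  rw [← this]
  exact Ideal.mul_mem_left _ _ hc

lemma stab_of_closed (J : Ideal (MvPolynomial (Fin n) K)) (T : Set (Fin n →₀ ℕ))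
    (h : ∀ a ∈ T, ∀ j : Fin n,
      (a + Finsupp.single j 1) ∈ T ∨ (monomial (a + Finsupp.single j 1) (1 : K)) ∈ J) :
    IsSSubmoduleModJ J (Submodule.span K ((fun a => (monomial a (1 : K) : MvPolynomial (Fin n) K)) '' T)) := by
  intro j p hp
  induction hp using Submodule.span_induction with
  | mem x hx =>
      obtain ⟨a, haT, rfl⟩ := hx
      rw [X_mul_monomial']
      rcases h a haT j with h1 | h1
      · exact Submodule.mem_sup_left (Submodule.subset_span ⟨_, h1, rfl⟩)
      · exact Submodule.mem_sup_right (Submodule.subset_span ⟨_, h1, rfl⟩)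
  | zero => simp
  | add x y _ _ hx hy => rw [mul_add]; exact Submodule.add_mem _ hx hy
  | smul c x _ hx => rw [mul_smul_comm]; exact Submodule.smul_mem _ c hx


/-- **Theorem.** If `Pt : P^g_{I/J} = ⋃ᵢ [cᵢ, dᵢ]` is a partition such that all partial
unions `⋃_{i<t} [cᵢ, dᵢ]` are poset ideals of `P^g_{I/J}`, then the Stanley decomposition
`D(Pt)` is induced by a prime filtration; equivalently, its Stanley spaces can be ordered
so that every partial sum is a `ℤⁿ`-graded `S`-submodule of `I/J`. -/
theorem partition_with_poset_ideal_initials_induced_by_prime_filtration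
    {n : ℕ} {K : Type} [Field K] (I J : Ideal (MvPolynomial (Fin n) K))
    (hI : IsMonomialIdeal I) (hJ : IsMonomialIdeal J) (hJI : J < I)
    (g : Fin n →₀ ℕ) (hg : ∀ a ∈ expSet I J, a ≤ g)
    (Pt : IntervalPartition (charPoset I J g))
    (hposet : Pt.InitialsArePosetIdeals) :
    Pt.DPInducedByPrimeFiltration J g := by
  classical
  have hfin : ∀ i : Fin Pt.r, (Pt.innerSet g i).Finite := fun i =>
    (Set.finite_Icc (Pt.c i) (Pt.d i)).subset fun a ha => ha.1
  letI : ∀ i : Fin Pt.r, Fintype (Pt.innerSet g i) := fun i => (hfin i).fintype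
  letI : Fintype (Pt.DPIdx g) := by unfold IntervalPartition.DPIdx; infer_instance
  set D : ℕ := degw g with hD
  let w : Pt.DPIdx g → ℕ := fun x => (x.1 : ℕ) * (D + 1) + degw (x.2 : Fin n →₀ ℕ)
  set N := Fintype.card (Pt.DPIdx g) with hN
  let φ : Fin N ≃ Pt.DPIdx g := (Fintype.equivFin _).symm
  let f : Fin N → ℕ := fun s => w (φ s)
  let σ : Equiv.Perm (Fin N) := Tuple.sort f
  let E : Fin N ≃ Pt.DPIdx g := (Fin.revPerm.trans σ).trans φ
  have hEapp : ∀ s, E s = φ (σ (Fin.rev s)) := fun s => rfl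
  have hkey : ∀ s s' : Fin N, w (E s) < w (E s') → s' < s := by
    intro s s' h
    by_contra hc
    push_neg at hc
    have h1 : Fin.rev s' ≤ Fin.rev s := Fin.rev_le_rev.mpr hc
    have h2 := Tuple.monotone_sort f h1
    simp only [Function.comp] at h2
    rw [hEapp s, hEapp s'] at h
    exact absurd h (not_lt.mpr h2)
  refine ⟨N, E, E.bijective, ?_⟩
  intro t
  let A : Pt.DPIdx g → Set (Fin n →₀ ℕ) := fun x =>
    {a | (x.2 : Fin n →₀ ℕ) ≤ a ∧ ∀ l ∉ Zset g (Pt.d x.1), a l = (x.2 : Fin n →₀ ℕ) l}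
  have hfam : ∀ x, Pt.DPfam K g x =
      Submodule.span K ((fun a => (monomial a (1 : K) : MvPolynomial (Fin n) K)) '' A x) :=
    fun x => rfl
  have hsup : (⨆ s : Fin N, ⨆ _ : (s : ℕ) < t, Pt.DPfam K g (E s)) =
      Submodule.span K ((fun a => (monomial a (1 : K) : MvPolynomial (Fin n) K)) ''
        (⋃ s : Fin N, ⋃ _ : (s : ℕ) < t, A (E s))) := by
    simp only [hfam, Set.image_iUnion, Submodule.span_iUnion]
  rw [hsup]
  apply stab_of_closed
  intro a haT j
  simp only [Set.mem_iUnion] at haT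
  obtain ⟨s, hst, ha⟩ := haT
  set x := E s with hx
  obtain ⟨⟨hcc', hc'd⟩, hc'Z⟩ := x.2.2
  by_cases hj : j ∈ Zset g (Pt.d x.1)
  · left
    refine Set.mem_iUnion.2 ⟨s, Set.mem_iUnion.2 ⟨hst, ⟨?_, fun l hl => ?_⟩⟩⟩
    · exact le_trans ha.1 (Finsupp.le_def.mpr fun l => by simp)
    · have hlj : ¬ (j = l) := fun h => hl (h ▸ hj)
      rw [Finsupp.add_apply, Finsupp.single_apply, if_neg hlj, add_zero]
      exact ha.2 l hl
  · by_cases hbJ : (monomial (a + Finsupp.single j 1) (1 : K) : MvPolynomial (Fin n) K) ∈ J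
    · right; exact hbJ
    left
    set b := a + Finsupp.single j 1 with hb
    have hab : a ≤ b := Finsupp.le_def.mpr fun l => by simp [hb, Finsupp.add_apply]
    have hci_a : Pt.c x.1 ≤ a := le_trans hcc' ha.1
    have hcI : (monomial (Pt.c x.1) (1 : K) : MvPolynomial (Fin n) K) ∈ I := (Pt.mem_c x.1).1.1
    have haI : (monomial a (1 : K) : MvPolynomial (Fin n) K) ∈ I := monomial_mem_of_le hcI hci_a
    have hbI : (monomial b (1 : K) : MvPolynomial (Fin n) K) ∈ I :=
      monomial_mem_of_le hcI (hci_a.trans hab)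
    have haJ : (monomial a (1 : K) : MvPolynomial (Fin n) K) ∉ J := by
      intro h
      apply hbJ
      rw [← X_mul_monomial']
      exact Ideal.mul_mem_left _ _ h
    have hbg : b ≤ g := hg b ⟨hbI, hbJ⟩
    have hbP : b ∈ charPoset I J g := ⟨⟨hbI, hbJ⟩, hbg⟩
    have hag : a ≤ g := hab.trans hbg
    have haP : a ∈ charPoset I J g := ⟨⟨haI, haJ⟩, hag⟩
    have haIcc : a ∈ Set.Icc (Pt.c x.1) (Pt.d x.1) := by
      refine ⟨hci_a, Finsupp.le_def.mpr fun l => ?_⟩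
      by_cases hl : l ∈ Zset g (Pt.d x.1)
      · have hdl : Pt.d x.1 l = g l := (Finset.mem_filter.mp hl).2
        rw [hdl]; exact Finsupp.le_def.mp hag l
      · rw [ha.2 l hl]; exact Finsupp.le_def.mp hc'd l
    obtain ⟨k, hbk⟩ := Pt.cover b hbP
    have hik : (x.1 : ℕ) ≤ (k : ℕ) := by
      by_contra hik
      push_neg at hik
      obtain ⟨i', hi', haI'⟩ := hposet (x.1 : ℕ) b a ⟨k, hik, hbk⟩ haP hab
      have hne : i' ≠ x.1 := fun h => by simp [h] at hi'
      exact Set.disjoint_left.mp (Pt.disj i' x.1 hne) haI' haIcc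
    let c'' : Fin n →₀ ℕ := Finsupp.equivFunOnFinite.symm
      (fun l => if l ∈ Zset g (Pt.d k) then Pt.c k l else b l)
    have hc''app : ∀ l, c'' l = if l ∈ Zset g (Pt.d k) then Pt.c k l else b l := fun l => rfl
    have hc''mem : c'' ∈ Pt.innerSet g k := by
      refine ⟨⟨Finsupp.le_def.mpr fun l => ?_, Finsupp.le_def.mpr fun l => ?_⟩, fun l hl => ?_⟩
      · rw [hc''app]; split_ifs with hl
        · exact le_rfl
        · exact Finsupp.le_def.mp hbk.1 l
      · rw [hc''app]; split_ifs with hl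
        · exact Finsupp.le_def.mp (Pt.le k) l
        · exact Finsupp.le_def.mp hbk.2 l
      · rw [hc''app, if_pos hl]
    have hbA : b ∈ A ⟨k, ⟨c'', hc''mem⟩⟩ := by
      refine ⟨Finsupp.le_def.mpr fun l => ?_, fun l hl => ?_⟩
      · rw [hc''app]; split_ifs with hl
        · exact Finsupp.le_def.mp hbk.1 l
        · exact le_rfl
      · rw [hc''app, if_neg hl]
    have hwlt : w x < w ⟨k, ⟨c'', hc''mem⟩⟩ := by
      rcases lt_or_eq_of_le hik with hik' | hik'
      · have h1 : degw (x.2 : Fin n →₀ ℕ) ≤ D :=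
          degw_mono (le_trans hc'd (Pt.mem_d x.1).2)
        have h2 : (x.1 : ℕ) * (D + 1) + degw (x.2 : Fin n →₀ ℕ) < (k : ℕ) * (D + 1) := by
          have : ((x.1 : ℕ) + 1) * (D + 1) ≤ (k : ℕ) * (D + 1) :=
            Nat.mul_le_mul_right _ hik'
          nlinarith
        exact lt_of_lt_of_le h2 (Nat.le_add_right _ _)
      · have hkfin : k = x.1 := Fin.ext hik'.symm
        subst hkfin
        have hceq : c'' = (x.2 : Fin n →₀ ℕ) + Finsupp.single j 1 := by
          ext l
          rw [hc''app]
          by_cases hl : l ∈ Zset g (Pt.d x.1)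
          · have hlj : ¬ (j = l) := fun h => hj (h ▸ hl)
            rw [if_pos hl]
            simp [Finsupp.add_apply, Finsupp.single_apply, hlj, hc'Z l hl]
          · rw [if_neg hl]
            by_cases hlj : j = l
            · subst hlj
              simp [hb, Finsupp.add_apply, Finsupp.single_apply, ha.2 j hj]
            · simp [hb, Finsupp.add_apply, Finsupp.single_apply, hlj, ha.2 l hl]
        show (x.1 : ℕ) * (D + 1) + degw (x.2 : Fin n →₀ ℕ) <
          (x.1 : ℕ) * (D + 1) + degw c''
        rw [hceq, degw_add_single]
        omega
    refine Set.mem_iUnion.2 ⟨E.symm ⟨k, ⟨c'', hc''mem⟩⟩, Set.mem_iUnion.2 ⟨?_, ?_⟩⟩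
    · have hs' : E (E.symm ⟨k, ⟨c'', hc''mem⟩⟩) = ⟨k, ⟨c'', hc''mem⟩⟩ := E.apply_symm_apply _
      have hlt : E.symm ⟨k, ⟨c'', hc''mem⟩⟩ < s := by
        apply hkey
        rw [hs', ← hx]
        exact hwlt
      exact lt_trans hlt hst
    · have hs'' : E (E.symm ⟨k, ⟨c'', hc''mem⟩⟩) = ⟨k, ⟨c'', hc''mem⟩⟩ := E.apply_symm_apply _
      rw [hs'']
      exact hbA

end StanleyPaper
end

section
/- Let J ⊂ I be monomial ideals of S = K[x_1,…,x_n] and g ∈ ℕ^n with a ≤ g for all a with x^a ∈ I \ J. If D is a Stanley decomposition of I/J which is induced by a prime filtration of I/J, then there exists a partition 𝒫 of P^g_{I/J} into intervals such that the associated Stanley decomposition D(𝒫) is induced by a prime filtration and sdepth D(𝒫) ≥ sdepth D. -/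
open MvPolynomial

namespace StanleyPaper

variable {n : ℕ} {K : Type} [Field K]

/-- coefficient at `a` as a `K`-linear map. -/
private def lcoeffK (n : ℕ) (K : Type) [Field K] (a : Fin n →₀ ℕ) :
    MvPolynomial (Fin n) K →ₗ[K] K where
  toFun p := coeff a p
  map_add' p q := coeff_add a p q
  map_smul' c p := coeff_smul a c p

lemma mem_span_monomials_iff {n : ℕ} {K : Type} [Field K] {S : Set (Fin n →₀ ℕ)}
    {a : Fin n →₀ ℕ} :
    (monomial a (1 : K) : MvPolynomial (Fin n) K) ∈
      Submodule.span K ((fun e => (monomial e (1 : K) : MvPolynomial (Fin n) K)) '' S) ↔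
    a ∈ S := by
  constructor
  · intro h
    by_contra ha
    have hker : Submodule.span K ((fun e => (monomial e (1 : K) : MvPolynomial (Fin n) K)) '' S)
        ≤ LinearMap.ker (lcoeffK n K a) := by
      rw [Submodule.span_le]
      rintro x ⟨e, he, rfl⟩
      have : e ≠ a := fun h => ha (h ▸ he)
      simp [LinearMap.mem_ker, lcoeffK, coeff_monomial, this]
    have := hker h
    simp [LinearMap.mem_ker, lcoeffK, coeff_monomial] at this
  · intro h
    exact Submodule.subset_span ⟨a, h, rfl⟩

lemma monomial_mem_stanleySpace_iff {n : ℕ} {K : Type} [Field K] {c a : Fin n →₀ ℕ}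
    {Z : Finset (Fin n)} :
    (monomial a (1 : K) : MvPolynomial (Fin n) K) ∈ stanleySpace K c Z ↔
      (c ≤ a ∧ ∀ j ∉ Z, a j = c j) :=
  mem_span_monomials_iff

lemma monomial_mem_quotSpace_iff {n : ℕ} {K : Type} [Field K]
    {I J : Ideal (MvPolynomial (Fin n) K)} {a : Fin n →₀ ℕ} :
    (monomial a (1 : K) : MvPolynomial (Fin n) K) ∈ quotSpace I J ↔ a ∈ expSet I J :=
  mem_span_monomials_iff

lemma monomial_mem_iSup_stanley {n : ℕ} {K : Type} [Field K] {m : ℕ}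
    {u : Fin m → (Fin n →₀ ℕ)} {Z : Fin m → Finset (Fin n)} {a : Fin n →₀ ℕ}
    (h : (monomial a (1 : K) : MvPolynomial (Fin n) K) ∈ ⨆ i, stanleySpace K (u i) (Z i)) :
    ∃ i, u i ≤ a ∧ ∀ j ∉ Z i, a j = u i j := by
  have heq : (⨆ i, stanleySpace K (u i) (Z i)) =
      Submodule.span K ((fun e => (monomial e (1 : K) : MvPolynomial (Fin n) K)) ''
        ⋃ i, {e | u i ≤ e ∧ ∀ j ∉ Z i, e j = u i j}) := by
    rw [Set.image_iUnion, Submodule.span_iUnion]; rfl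
  rw [heq, mem_span_monomials_iff] at h
  simpa using h

lemma X_mul_mem_Jspan {n : ℕ} {K : Type} [Field K] {J : Ideal (MvPolynomial (Fin n) K)}
    (j : Fin n) {q : MvPolynomial (Fin n) K} (hq : q ∈ Jspan J) :
    (X j : MvPolynomial (Fin n) K) * q ∈ Jspan J := by
  induction hq using Submodule.span_induction with
  | mem x hx =>
    obtain ⟨a, ha, rfl⟩ := hx
    have hXm : (X j : MvPolynomial (Fin n) K) * monomial a 1
        = monomial (a + Finsupp.single j 1) 1 := by
      rw [X, monomial_mul]; ring_nf; rw [add_comm]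
    rw [hXm]
    refine Submodule.subset_span ⟨a + Finsupp.single j 1, ?_, rfl⟩
    show (monomial (a + Finsupp.single j 1) (1 : K) : MvPolynomial (Fin n) K) ∈ J
    rw [← hXm]
    exact Ideal.mul_mem_left J _ ha
  | zero => rw [mul_zero]; exact zero_mem _
  | add x y _ _ hx hy => rw [mul_add]; exact add_mem hx hy
  | smul c x _ hx => rw [mul_smul_comm]; exact Submodule.smul_mem _ _ hx

/-- **Theorem.** If a Stanley decomposition `D` of `I/J` is induced by a prime filtration,
then there is a partition `Pt` of `P^g_{I/J}` such that `D(Pt)` is induced by a prime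
filtration and `sdepth D(Pt) ≥ sdepth D`. -/
theorem induced_decomposition_dominated_by_induced_partition
    {n : ℕ} {K : Type} [Field K] (I J : Ideal (MvPolynomial (Fin n) K))
    (hI : IsMonomialIdeal I) (hJ : IsMonomialIdeal J) (hJI : J < I)
    (g : Fin n →₀ ℕ) (hg : ∀ a ∈ expSet I J, a ≤ g)
    (D : StanleyDec I J) (hD : D.InducedByPrimeFiltration) :
    ∃ Pt : IntervalPartition (charPoset I J g),
      Pt.DPInducedByPrimeFiltration J g ∧ D.sdepth ≤ Pt.sdepthDP g := by
  classical
  obtain ⟨σ, hσ⟩ := hD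
  obtain ⟨hLI, hInd, hSup⟩ := D.isDecomp
  set d : Fin D.m → (Fin n →₀ ℕ) := fun i =>
    Finsupp.equivFunOnFinite.symm (fun j => if j ∈ D.Z i then g j else D.u i j) with hd_def
  have hd : ∀ i j, d i j = if j ∈ D.Z i then g j else D.u i j := by
    intro i j; simp [hd_def]
  have hu_mem : ∀ i, D.u i ∈ expSet I J := by
    intro i
    have h1 : (monomial (D.u i) (1:K) : MvPolynomial (Fin n) K)
        ∈ stanleySpace K (D.u i) (D.Z i) :=
      monomial_mem_stanleySpace_iff.2 ⟨le_refl _, fun j _ => rfl⟩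
    have h2 := (le_iSup (fun i => stanleySpace K (D.u i) (D.Z i)) i) h1
    rw [hSup] at h2
    exact monomial_mem_quotSpace_iff.1 h2
  have hu_le_g : ∀ i, D.u i ≤ g := fun i => hg _ (hu_mem i)
  have hud : ∀ i, D.u i ≤ d i := by
    intro i; rw [Finsupp.le_def]; intro j; rw [hd]
    split_ifs
    · exact Finsupp.le_def.1 (hu_le_g i) j
    · exact le_refl _
  have hdg : ∀ i, d i ≤ g := by
    intro i; rw [Finsupp.le_def]; intro j; rw [hd]
    split_ifs
    · exact le_refl _
    · exact Finsupp.le_def.1 (hu_le_g i) j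
  have hZsub : ∀ i, D.Z i ⊆ Zset g (d i) := by
    intro i j hj
    simp only [Zset, Finset.mem_filter, Finset.mem_univ, true_and]
    rw [hd]; simp [hj]
  have hIcc : ∀ i a, a ∈ Set.Icc (D.u i) (d i) ↔
      ((D.u i ≤ a ∧ ∀ j ∉ D.Z i, a j = D.u i j) ∧ a ≤ g) := by
    intro i a
    constructor
    · rintro ⟨h1, h2⟩
      refine ⟨⟨h1, fun j hj => ?_⟩, le_trans h2 (hdg i)⟩
      have h3 := Finsupp.le_def.1 h2 j
      rw [hd] at h3; simp only [hj, if_false] at h3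
      exact le_antisymm h3 (Finsupp.le_def.1 h1 j)
    · rintro ⟨⟨h1, h2⟩, h3⟩
      refine ⟨h1, ?_⟩
      rw [Finsupp.le_def]; intro j; rw [hd]
      split_ifs with hj
      · exact Finsupp.le_def.1 h3 j
      · exact le_of_eq (h2 j hj)
  have hmemS : ∀ i a, a ∈ Set.Icc (D.u i) (d i) →
      (monomial a (1:K) : MvPolynomial (Fin n) K) ∈ stanleySpace K (D.u i) (D.Z i) := by
    intro i a ha
    obtain ⟨⟨h1, h2⟩, -⟩ := (hIcc i a).1 ha
    exact monomial_mem_stanleySpace_iff.2 ⟨h1, h2⟩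
  have hmemP : ∀ i a, a ∈ Set.Icc (D.u i) (d i) → a ∈ charPoset I J g := by
    intro i a ha
    have h2 := (le_iSup (fun i => stanleySpace K (D.u i) (D.Z i)) i) (hmemS i a ha)
    rw [hSup] at h2
    exact ⟨monomial_mem_quotSpace_iff.1 h2, ((hIcc i a).1 ha).2⟩
  have hcover : ∀ a ∈ charPoset I J g, ∃ i, a ∈ Set.Icc (D.u i) (d i) := by
    intro a ha
    have h1 : (monomial a (1:K) : MvPolynomial (Fin n) K)
        ∈ ⨆ i, stanleySpace K (D.u i) (D.Z i) := by
      rw [hSup]; exact monomial_mem_quotSpace_iff.2 ha.1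
    obtain ⟨i, h2, h3⟩ := monomial_mem_iSup_stanley h1
    exact ⟨i, (hIcc i a).2 ⟨⟨h2, h3⟩, ha.2⟩⟩
  have hdisj : ∀ i j, i ≠ j →
      Disjoint (Set.Icc (D.u i) (d i)) (Set.Icc (D.u j) (d j)) := by
    intro i j hij
    rw [Set.disjoint_left]
    intro a hai haj
    have h1 := hmemS i a hai
    have h2 := hmemS j a haj
    have h3 := Submodule.disjoint_def.1 (hInd.pairwiseDisjoint hij) _ h1 h2
    exact (one_ne_zero : (1:K) ≠ 0) (monomial_eq_zero.mp h3)
  have hinner : ∀ (i : Fin D.m) (c' : Fin n →₀ ℕ),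
      c' ∈ Set.Icc (D.u i) (d i) → (∀ j ∈ Zset g (d i), c' j = D.u i j) → c' = D.u i := by
    intro i c' h1 h2
    ext j
    by_cases hj : j ∈ Zset g (d i)
    · exact h2 j hj
    · have hjZ : j ∉ D.Z i := fun h => hj (hZsub i h)
      exact ((hIcc i c').1 h1).1.2 j hjZ
  have hAlem : ∀ i, stanleySpace K (D.u i) (D.Z i) ≤
      stanleySpace K (D.u i) (Zset g (d i)) := by
    intro i
    apply Submodule.span_mono
    apply Set.image_mono
    rintro a ⟨ha1, ha2⟩
    exact ⟨ha1, fun j hj => ha2 j (fun h => hj (hZsub i h))⟩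
  have hBlem : ∀ i, stanleySpace K (D.u i) (Zset g (d i)) ≤
      stanleySpace K (D.u i) (D.Z i) ⊔ Jspan J := by
    intro i
    rw [stanleySpace, Submodule.span_le]
    rintro x ⟨a, ⟨ha1, ha2⟩, rfl⟩
    by_cases hcase : ∀ j ∉ D.Z i, a j = D.u i j
    · exact Submodule.mem_sup_left (monomial_mem_stanleySpace_iff.2 ⟨ha1, hcase⟩)
    · push_neg at hcase
      obtain ⟨j, hjZ, hja⟩ := hcase
      have hjZs : j ∈ Zset g (d i) := by
        by_contra hjn
        exact hja (ha2 j hjn)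
      have h1 : d i j = g j := by
        simpa [Zset] using hjZs
      rw [hd] at h1; simp only [hjZ, if_false] at h1
      have h2 : D.u i j ≤ a j := Finsupp.le_def.1 ha1 j
      have hIa : (monomial a (1:K) : MvPolynomial (Fin n) K) ∈ I := by
        have heq : (monomial a (1:K) : MvPolynomial (Fin n) K)
            = monomial (D.u i) 1 * monomial (a - D.u i) 1 := by
          rw [monomial_mul, mul_one, add_tsub_cancel_of_le ha1]
        rw [heq]
        exact Ideal.mul_mem_right _ I (hu_mem i).1
      have hJa : (monomial a (1:K) : MvPolynomial (Fin n) K) ∈ J := by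
        by_contra hnJ
        have hmem : a ∈ expSet I J := ⟨hIa, hnJ⟩
        have h4 := Finsupp.le_def.1 (hg a hmem) j
        omega
      exact Submodule.mem_sup_right (Submodule.subset_span ⟨a, hJa, rfl⟩)
  refine ⟨⟨D.m, D.u, d, hud, (fun i => hmemP i _ ⟨le_refl _, hud i⟩),
    (fun i => hmemP i _ ⟨hud i, le_refl _⟩), (fun i => hmemP i), hcover, hdisj⟩, ?_, ?_⟩
  · -- D(Pt) induced by prime filtration
    refine ⟨D.m, fun s => ⟨σ.symm s, ⟨D.u (σ.symm s),
      ⟨⟨le_refl _, hud _⟩, fun j _ => rfl⟩⟩⟩, ⟨?_, ?_⟩, ?_⟩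
    · intro s1 s2 h
      exact σ.symm.injective (congrArg Sigma.fst h)
    · rintro ⟨i, x, hx1, hx2⟩
      have hxe : x = D.u i := hinner i x hx1 hx2
      subst hxe
      exact ⟨σ i, Sigma.subtype_ext (σ.symm_apply_apply i) (by simp)⟩
    · intro t
      have hA_eq : (⨆ s : Fin D.m, ⨆ _ : (s:ℕ) < t,
            stanleySpace K (D.u (σ.symm s)) (Zset g (d (σ.symm s)))) ⊔ Jspan J
          = (⨆ i : Fin D.m, ⨆ _ : ((σ i : Fin D.m) : ℕ) < t,
            stanleySpace K (D.u i) (D.Z i)) ⊔ Jspan J := by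
        apply le_antisymm
        · refine sup_le ?_ le_sup_right
          refine iSup_le fun s => iSup_le fun hs => ?_
          have hs' : ((σ (σ.symm s) : Fin D.m) : ℕ) < t := by simpa using hs
          exact le_trans (hBlem (σ.symm s)) (sup_le (le_trans
            (le_iSup₂_of_le (σ.symm s) hs' le_rfl) le_sup_left) le_sup_right)
        · refine sup_le ?_ le_sup_right
          refine iSup_le fun i => iSup_le fun hi => ?_
          exact le_trans (hAlem i) (le_trans (le_iSup₂_of_le (σ i) hi
            (le_of_eq (by rw [Equiv.symm_apply_apply]))) le_sup_left)
      intro j p hp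
      show X j * p ∈ (⨆ s : Fin D.m, ⨆ _ : (s:ℕ) < t,
        stanleySpace K (D.u (σ.symm s)) (Zset g (d (σ.symm s)))) ⊔ Jspan J
      have hp2 : p ∈ ⨆ s : Fin D.m, ⨆ _ : (s:ℕ) < t,
          stanleySpace K (D.u (σ.symm s)) (Zset g (d (σ.symm s))) := hp
      have hp' : p ∈ (⨆ i : Fin D.m, ⨆ _ : ((σ i : Fin D.m) : ℕ) < t,
          stanleySpace K (D.u i) (D.Z i)) ⊔ Jspan J := by
        rw [← hA_eq]; exact Submodule.mem_sup_left hp2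
      obtain ⟨v, hv, q, hq, rfl⟩ := Submodule.mem_sup.1 hp'
      rw [mul_add]
      apply add_mem
      · rw [hA_eq]
        exact hσ t j v hv
      · exact Submodule.mem_sup_right (X_mul_mem_Jspan j hq)
  · -- sdepth inequality
    show D.sdepth ≤ sInf {k | ∃ i : Fin D.m, k = rho g (d i)}
    by_cases hm : D.m = 0
    · have h1 : {k | ∃ i : Fin D.m, k = (D.Z i).card} = ∅ := by
        ext k
        simp only [Set.mem_setOf_eq, Set.mem_empty_iff_false, iff_false, not_exists]
        intro i
        exact absurd i.2 (by omega)
      show sInf {k | ∃ i : Fin D.m, k = (D.Z i).card} ≤ _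
      rw [h1, Nat.sInf_empty]
      exact Nat.zero_le _
    · apply le_csInf
      · exact ⟨rho g (d ⟨0, Nat.pos_of_ne_zero hm⟩), ⟨0, Nat.pos_of_ne_zero hm⟩, rfl⟩
      · rintro b ⟨i, rfl⟩
        calc D.sdepth ≤ (D.Z i).card := Nat.sInf_le ⟨i, rfl⟩
        _ ≤ (Zset g (d i)).card := Finset.card_le_card (hZsub i)

end StanleyPaper
end

section
/- Every finitely generated ℤ^n-graded module M over the polynomial ring S = K[x_1,…,x_n] admits a Stanley decomposition, i.e., a presentation of the ℤ^n-graded K-vector space M as a finite direct sum M = ⊕_{i=1}^m u_iK[Z_i] of Stanley spaces. -/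
open MvPolynomial

namespace StanleyPaper

variable (n : ℕ) (K : Type) [Field K]
variable (M : Type) [AddCommGroup M] [Module K M]
  [Module (MvPolynomial (Fin n) K) M] [IsScalarTower K (MvPolynomial (Fin n) K) M]

/-- A `ℤⁿ`-grading of an `S = K[x_1,…,x_n]`-module `M`: a direct sum decomposition
`M = ⊕_{a ∈ ℤⁿ} M_a` into `K`-subspaces compatible with the multigrading of `S`. -/
structure Multigrading where
  grade : (Fin n → ℤ) → Submodule K M
  internal : DirectSum.IsInternal grade
  smul_mem : ∀ (d : Fin n →₀ ℕ) (a : Fin n → ℤ) (x : M), x ∈ grade a →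
    (monomial d (1 : K) : MvPolynomial (Fin n) K) • x ∈ grade (a + fun i => (d i : ℤ))

variable {n K M}

/-- The Stanley space `u K[Z] ⊆ M`: the `K`-subspace generated by all `x^e • u` with
`e` supported in `Z`. -/
def mStanleySpace (u : M) (Z : Finset (Fin n)) : Submodule K M :=
  Submodule.span K
    ((fun e : Fin n →₀ ℕ => (monomial e (1 : K) : MvPolynomial (Fin n) K) • u) ''
      {e | ∀ j ∉ Z, e j = 0})

/-- A Stanley decomposition of the `ℤⁿ`-graded module `M`: a finite direct sum
decomposition `M = ⊕ u_i K[Z_i]` of the `ℤⁿ`-graded `K`-vector space `M` into Stanley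
spaces, each of which is a free `K[Z_i]`-module. -/
structure MStanleyDec (gr : Multigrading n K M) where
  m : ℕ
  u : Fin m → M
  deg : Fin m → (Fin n → ℤ)
  Z : Fin m → Finset (Fin n)
  homog : ∀ i, u i ∈ gr.grade (deg i)
  free : ∀ i, LinearIndependent K fun e : {e : Fin n →₀ ℕ // ∀ j ∉ Z i, e j = 0} =>
    (monomial (e : Fin n →₀ ℕ) (1 : K) : MvPolynomial (Fin n) K) • u i
  internal : DirectSum.IsInternal fun i => mStanleySpace (K := K) (u i) (Z i)

/-- `sdepth D = min |Z_i|`. -/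
noncomputable def MStanleyDec.sdepth {gr : Multigrading n K M} (D : MStanleyDec gr) : ℕ :=
  sInf {k | ∃ i, k = (D.Z i).card}

/-- The Stanley depth of the `ℤⁿ`-graded module `M`. -/
noncomputable def msdepth (gr : Multigrading n K M) : ℕ :=
  sSup {k | ∃ D : MStanleyDec gr, k = D.sdepth}

/-- An `S`-submodule `N` of `M` is `ℤⁿ`-graded iff every element of `N` is a sum of
homogeneous elements of `N`. -/
def IsGradedSub (gr : Multigrading n K M) (N : Submodule (MvPolynomial (Fin n) K) M) :
    Prop :=
  N.restrictScalars K ≤ ⨆ a : Fin n → ℤ, (N.restrictScalars K ⊓ gr.grade a)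

/-- A prime filtration of the `ℤⁿ`-graded module `M`: a chain
`0 = N 0 ⊆ N 1 ⊆ ⋯ ⊆ N m = M` of `ℤⁿ`-graded `S`-submodules such that
`N (i+1) / N i ≅ (S/P i)(-a_i)`, i.e. `N (i+1) / N i` is generated by the class of a
homogeneous element `u i` of degree `deg i` whose annihilator modulo `N i` is the
monomial prime ideal `P i`. -/
structure MPrimeFiltration (gr : Multigrading n K M) where
  m : ℕ
  N : Fin (m + 1) → Submodule (MvPolynomial (Fin n) K) M
  u : Fin m → M
  deg : Fin m → (Fin n → ℤ)
  P : Fin m → Ideal (MvPolynomial (Fin n) K)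
  bot : N 0 = ⊥
  top : N (Fin.last m) = ⊤
  graded : ∀ i, IsGradedSub gr (N i)
  homog : ∀ i, u i ∈ gr.grade (deg i)
  gen : ∀ i, N i.succ = N i.castSucc ⊔ Submodule.span (MvPolynomial (Fin n) K) {u i}
  ann : ∀ i, ∀ s : MvPolynomial (Fin n) K, s • u i ∈ N i.castSucc ↔ s ∈ P i
  isPrime : ∀ i, IsMonomialPrime (P i)

/-- The support of a prime filtration. -/
def MPrimeFiltration.supp {gr : Multigrading n K M} (F : MPrimeFiltration gr) :
    Set (Ideal (MvPolynomial (Fin n) K)) :=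
  Set.range F.P

/-- `fdepth ℱ = min { dim S/P : P ∈ supp ℱ }`. -/
noncomputable def MPrimeFiltration.fdepth {gr : Multigrading n K M}
    (F : MPrimeFiltration gr) : WithBot ℕ∞ :=
  ⨅ i : Fin F.m, ringKrullDim (MvPolynomial (Fin n) K ⧸ F.P i)

/-! ### Auxiliary material for the proof -/

section Aux

open Finsupp

variable {n : ℕ} {K : Type} [Field K] {M : Type} [AddCommGroup M] [Module K M]
  [Module (MvPolynomial (Fin n) K) M] [IsScalarTower K (MvPolynomial (Fin n) K) M]

local notation "S" => MvPolynomial (Fin n) K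

set_option linter.unusedSectionVars false

lemma kSmul (c : K) (v : M) : c • v = (C c : S) • v := by
  rw [← MvPolynomial.algebraMap_eq, algebraMap_smul]

lemma N_ksmul {N : Submodule S M} {v : M} (hv : v ∈ N) (c : K) : c • v ∈ N :=
  (N.restrictScalars K).smul_mem c hv

lemma monomial_smul_eq (e : Fin n →₀ ℕ) (c : K) (v : M) :
    (monomial e c : S) • v = c • ((monomial e (1 : K) : S) • v) := by
  rw [show (monomial e c : S) = c • (monomial e (1 : K) : S) by
    rw [MvPolynomial.smul_monomial, smul_eq_mul, mul_one], smul_assoc]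

lemma smul_eq_sum (s : S) (v : M) :
    s • v = ∑ e ∈ s.support, s.coeff e • ((monomial e (1 : K) : S) • v) := by
  conv_lhs => rw [s.as_sum]
  rw [Finset.sum_smul]
  exact Finset.sum_congr rfl fun e _ => monomial_smul_eq e _ v

/-- The degree map `e ↦ a₀ + e` is injective. -/
lemma deg_inj {a₀ : Fin n → ℤ} {e e' : Fin n →₀ ℕ}
    (h : (a₀ + fun i => (e i : ℤ)) = a₀ + fun i => (e' i : ℤ)) : e = e' := by
  have h2 : (fun i => (e i : ℤ)) = fun i => (e' i : ℤ) := by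
    funext i
    have := congrFun h i
    simpa using this
  ext i
  exact_mod_cast congrFun h2 i

/-- The projection onto the graded component of degree `a`. -/
noncomputable def Multigrading.proj (gr : Multigrading n K M) (a : Fin n → ℤ) : M →ₗ[K] M :=
  (gr.grade a).subtype ∘ₗ (DirectSum.component K (Fin n → ℤ) (fun b => ↥(gr.grade b)) a) ∘ₗ
    (LinearEquiv.ofBijective (DirectSum.coeLinearMap gr.grade) gr.internal).symm.toLinearMap

lemma Multigrading.proj_eq_self (gr : Multigrading n K M) {a : Fin n → ℤ} {x : M}
    (hx : x ∈ gr.grade a) : gr.proj a x = x := by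
  simp only [Multigrading.proj, LinearMap.coe_comp, Function.comp_apply,
    LinearEquiv.coe_coe]
  rw [show (DirectSum.component K (Fin n → ℤ) (fun b => ↥(gr.grade b)) a)
      ((LinearEquiv.ofBijective (DirectSum.coeLinearMap gr.grade) gr.internal).symm x)
      = ((LinearEquiv.ofBijective (DirectSum.coeLinearMap gr.grade) gr.internal).symm x) a
      from rfl]
  rw [gr.internal.ofBijective_coeLinearMap_of_mem hx]
  rfl

lemma Multigrading.proj_eq_zero (gr : Multigrading n K M) {a b : Fin n → ℤ} {x : M}
    (hx : x ∈ gr.grade a) (hab : a ≠ b) : gr.proj b x = 0 := by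
  simp only [Multigrading.proj, LinearMap.coe_comp, Function.comp_apply,
    LinearEquiv.coe_coe]
  rw [show (DirectSum.component K (Fin n → ℤ) (fun b => ↥(gr.grade b)) b)
      ((LinearEquiv.ofBijective (DirectSum.coeLinearMap gr.grade) gr.internal).symm x)
      = ((LinearEquiv.ofBijective (DirectSum.coeLinearMap gr.grade) gr.internal).symm x) b
      from rfl]
  rw [gr.internal.ofBijective_coeLinearMap_of_mem_ne hab hx]
  rfl

lemma Multigrading.proj_finsupp_sum (gr : Multigrading n K M) (f : (Fin n → ℤ) →₀ M)
    (hf : ∀ a, f a ∈ gr.grade a) (b : Fin n → ℤ) :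
    gr.proj b (f.sum fun _ x => x) = f b := by
  classical
  rw [Finsupp.sum, map_sum]
  rw [Finset.sum_congr rfl (fun a ha => show gr.proj b (f a) = if b = a then f a else 0 by
    by_cases hab : a = b
    · subst hab; simp [gr.proj_eq_self (hf a)]
    · simp [gr.proj_eq_zero (hf a) hab, Ne.symm hab])]
  rw [Finset.sum_ite_eq]
  split
  · rfl
  · exact (Finsupp.notMem_support_iff.mp (by assumption)).symm

lemma Multigrading.toZdeg_mem (gr : Multigrading n K M) {u : M} {a₀ : Fin n → ℤ}
    (hu : u ∈ gr.grade a₀) (e : Fin n →₀ ℕ) :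
    (monomial e (1 : K) : S) • u ∈ gr.grade (a₀ + fun i => (e i : ℤ)) :=
  gr.smul_mem e a₀ u hu

lemma Multigrading.proj_smul (gr : Multigrading n K M) {u : M} {a₀ : Fin n → ℤ}
    (hu : u ∈ gr.grade a₀) (s : S) (e : Fin n →₀ ℕ) :
    gr.proj (a₀ + fun i => (e i : ℤ)) (s • u)
      = s.coeff e • ((monomial e (1 : K) : S) • u) := by
  classical
  rw [smul_eq_sum, map_sum]
  rw [Finset.sum_congr rfl (fun e' he' =>
    show gr.proj (a₀ + fun i => (e i : ℤ)) (s.coeff e' • ((monomial e' (1:K) : S) • u))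
      = if e = e' then s.coeff e' • ((monomial e' (1:K) : S) • u) else 0 by
    by_cases hee : e = e'
    · subst hee
      rw [if_pos rfl, gr.proj_eq_self (Submodule.smul_mem _ _ (gr.toZdeg_mem hu e))]
    · rw [if_neg hee, gr.proj_eq_zero (Submodule.smul_mem _ _ (gr.toZdeg_mem hu e'))
        (fun h => hee (deg_inj h).symm)])]
  rw [Finset.sum_ite_eq]
  split
  · rfl
  · rw [MvPolynomial.notMem_support_iff.mp (by assumption), zero_smul]

/-- The annihilator of `u` modulo `N`. -/
noncomputable def annN (N : Submodule S M) (u : M) : Ideal S :=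
  N.comap (LinearMap.toSpanSingleton S M u)

lemma mem_annN {N : Submodule S M} {u : M} {s : S} : s ∈ annN N u ↔ s • u ∈ N :=
  Iff.rfl

/-- Graded components of elements of a graded submodule lie in the submodule. -/
lemma comp_mem (gr : Multigrading n K M) {N : Submodule S M} (hN : IsGradedSub gr N)
    {u : M} {a₀ : Fin n → ℤ} (hu : u ∈ gr.grade a₀) {s : S} (hs : s • u ∈ N)
    (e : Fin n →₀ ℕ) : s.coeff e • ((monomial e (1 : K) : S) • u) ∈ N := by
  obtain ⟨f, hf, hsum⟩ := (Submodule.mem_iSup_iff_exists_finsupp _ _).mp (hN hs)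
  have key : s.coeff e • ((monomial e (1 : K) : S) • u) = f (a₀ + fun i => (e i : ℤ)) := by
    rw [← gr.proj_smul hu s e, ← hsum,
      gr.proj_finsupp_sum f (fun a => ((Submodule.mem_inf.mp (hf a)).2))]
  rw [key]
  exact (Submodule.mem_inf.mp (hf _)).1

lemma monomial_mem_annN (gr : Multigrading n K M) {N : Submodule S M}
    (hN : IsGradedSub gr N) {u : M} {a₀ : Fin n → ℤ} (hu : u ∈ gr.grade a₀) {s : S}
    (hs : s ∈ annN N u) {e : Fin n →₀ ℕ} (he : e ∈ s.support) :
    (monomial e (1 : K) : S) • u ∈ N := by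
  have h1 := comp_mem gr hN hu (mem_annN.mp hs) e
  have hc : s.coeff e ≠ 0 := MvPolynomial.mem_support_iff.mp he
  have h2 : ((s.coeff e)⁻¹ • (s.coeff e • ((monomial e (1:K) : S) • u)) : M) ∈ N :=
    N_ksmul h1 _
  rwa [smul_smul, inv_mul_cancel₀ hc, one_smul] at h2

lemma sum_sub_single {e : Fin n →₀ ℕ} {j : Fin n} (hj : e j ≠ 0) :
    (e - Finsupp.single j 1).sum (fun _ m => m) + 1 = e.sum (fun _ m => m) := by
  have h : (e - Finsupp.single j 1) + Finsupp.single j 1 = e :=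
    tsub_add_cancel_of_le (by rw [Finsupp.single_le_iff]; omega)
  conv_rhs => rw [← h]
  rw [Finsupp.sum_add_index' (fun _ => rfl) (fun _ _ _ => rfl),
    Finsupp.sum_single_index rfl]

lemma monomial_eq_zero_smul {e : Fin n →₀ ℕ} (he : e = 0) (u : M) :
    (monomial e (1 : K) : S) • u = u := by
  subst he
  rw [show (monomial (0 : Fin n →₀ ℕ) (1 : K) : S) = 1 by
    rw [monomial_zero', C_1], one_smul]

lemma exists_compatible (gr : Multigrading n K M) {N : Submodule S M}
    (hN : IsGradedSub gr N) (hNtop : N ≠ ⊤) :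
    ∃ (u : M) (a₀ : Fin n → ℤ), u ∈ gr.grade a₀ ∧ u ∉ N ∧
      ∀ e : Fin n →₀ ℕ, (monomial e (1 : K) : S) • u ∈ N →
        ∃ j, e j ≠ 0 ∧ (X j : S) • u ∈ N := by
  have hex : ∃ (v : M) (a : Fin n → ℤ), v ∈ gr.grade a ∧ v ∉ N := by
    obtain ⟨x, hx⟩ : ∃ x : M, x ∉ N := by
      by_contra h
      push_neg at h
      exact hNtop (Submodule.eq_top_iff'.mpr h)
    have hxtop : x ∈ ⨆ a, gr.grade a := by
      rw [gr.internal.submodule_iSup_eq_top]; trivial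
    obtain ⟨f, hf, hsum⟩ := (Submodule.mem_iSup_iff_exists_finsupp _ _).mp hxtop
    by_contra h
    push_neg at h
    apply hx
    rw [← hsum]
    exact Submodule.sum_mem N fun a _ => h (f a) a (hf a)
  obtain ⟨v₀, a₀', hv₀, hv₀N⟩ := hex
  obtain ⟨I, hI, hImax⟩ := set_has_maximal_iff_noetherian.mpr inferInstance
    {I : Ideal S | ∃ (v : M) (a : Fin n → ℤ), v ∈ gr.grade a ∧ v ∉ N ∧ I = annN N v}
    ⟨annN N v₀, v₀, a₀', hv₀, hv₀N, rfl⟩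
  obtain ⟨u, a₀, hu, huN, rfl⟩ := hI
  refine ⟨u, a₀, hu, huN, ?_⟩
  suffices H : ∀ k : ℕ, ∀ e : Fin n →₀ ℕ, e.sum (fun _ m => m) ≤ k →
      (monomial e (1 : K) : S) • u ∈ N → ∃ j, e j ≠ 0 ∧ (X j : S) • u ∈ N by
    intro e he
    exact H _ e le_rfl he
  intro k
  induction k with
  | zero =>
    intro e hes hmem
    exfalso
    have he0 : e = 0 := by
      ext j
      by_contra hj
      have hjs : j ∈ e.support := Finsupp.mem_support_iff.mpr hj
      have : e j = 0 := by
        have := (Finset.sum_eq_zero_iff.mp (Nat.le_zero.mp hes)) j hjs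
        exact this
      exact hj this
    rw [monomial_eq_zero_smul he0 u] at hmem
    exact huN hmem
  | succ k ih =>
    intro e hes hmem
    by_cases he0 : e = 0
    · exfalso
      rw [monomial_eq_zero_smul he0 u] at hmem
      exact huN hmem
    obtain ⟨j, hj⟩ : ∃ j, e j ≠ 0 := by
      by_contra h
      push_neg at h
      exact he0 (Finsupp.ext h)
    by_cases hXj : (X j : S) • u ∈ N
    · exact ⟨j, hj, hXj⟩
    have hXdef : (X j : S) = monomial (Finsupp.single j 1) 1 := rfl
    have hvhom : (X j : S) • u
        ∈ gr.grade (a₀ + fun i => ((Finsupp.single j 1 : Fin n →₀ ℕ) i : ℤ)) := by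
      rw [hXdef]
      exact gr.smul_mem (Finsupp.single j 1) a₀ u hu
    have hle : annN N u ≤ annN N ((X j : S) • u) := by
      intro s hs
      have hcomm : s • ((X j : S) • u) = (X j : S) • (s • u) := by
        rw [smul_smul, smul_smul, mul_comm]
      rw [mem_annN, hcomm]
      exact Submodule.smul_mem N _ (mem_annN.mp hs)
    have heq : annN N ((X j : S) • u) = annN N u := by
      by_contra hne
      exact hImax (annN N ((X j : S) • u)) ⟨_, _, hvhom, hXj, rfl⟩
        (lt_of_le_of_ne hle (Ne.symm hne))
    have hmm : (monomial (e - Finsupp.single j 1) (1 : K) : S) • ((X j : S) • u) ∈ N := by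
      rw [smul_smul]
      have hmul : (monomial (e - Finsupp.single j 1) (1 : K) : S) * X j
          = monomial e (1 : K) := by
        rw [hXdef, monomial_mul, one_mul,
          tsub_add_cancel_of_le (by rw [Finsupp.single_le_iff]; omega)]
      rw [hmul]
      exact hmem
    have hmm2 : (monomial (e - Finsupp.single j 1) (1 : K) : S) • u ∈ N := by
      have h' : monomial (e - Finsupp.single j 1) (1 : K) ∈ annN N u :=
        heq ▸ mem_annN.mpr hmm
      exact mem_annN.mp h'
    obtain ⟨j', hj', hXj'⟩ := ih (e - Finsupp.single j 1)
      (by have h9 := sum_sub_single hj; omega) hmm2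
    refine ⟨j', fun h0 => hj' ?_, hXj'⟩
    rw [Finsupp.tsub_apply, h0]
    exact Nat.zero_sub _

lemma monomial_factor {e : Fin n →₀ ℕ} {j : Fin n} (hj : e j ≠ 0) :
    (monomial (e - Finsupp.single j 1) (1 : K) : S) * X j = monomial e 1 := by
  rw [show (X j : S) = monomial (Finsupp.single j 1) 1 from rfl, monomial_mul, one_mul,
    tsub_add_cancel_of_le (by rw [Finsupp.single_le_iff]; omega)]

lemma mem_stanley_of (u : M) (Z : Finset (Fin n)) {e : Fin n →₀ ℕ}
    (he : ∀ j ∉ Z, e j = 0) :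
    (monomial e (1 : K) : S) • u ∈ mStanleySpace (K := K) u Z :=
  Submodule.subset_span ⟨e, he, rfl⟩

lemma stanley_elem {u : M} {Z : Finset (Fin n)} {v : M} (hv : v ∈ mStanleySpace (K := K) u Z) :
    ∃ s : S, (∀ e ∈ s.support, ∀ j ∉ Z, e j = 0) ∧ s • u = v := by
  induction hv using Submodule.span_induction with
  | mem x hx =>
    obtain ⟨e, he, rfl⟩ := hx
    refine ⟨monomial e 1, fun e' he' j hj => ?_, rfl⟩
    classical
    rw [MvPolynomial.support_monomial] at he'
    rw [if_neg one_ne_zero] at he'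
    rw [Finset.mem_singleton] at he'
    subst he'
    exact he j hj
  | zero => exact ⟨0, by simp, by simp⟩
  | add x y hx hy ihx ihy =>
    obtain ⟨s1, h1, rfl⟩ := ihx
    obtain ⟨s2, h2, rfl⟩ := ihy
    classical
    refine ⟨s1 + s2, fun e he j hj => ?_, by rw [add_smul]⟩
    rcases Finset.mem_union.mp (MvPolynomial.support_add he) with h | h
    · exact h1 e h j hj
    · exact h2 e h j hj
  | smul c x hx ihx =>
    obtain ⟨s1, h1, rfl⟩ := ihx
    exact ⟨c • s1, fun e he j hj => h1 e (MvPolynomial.support_smul he) j hj,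
      smul_assoc c s1 u⟩

lemma stanley_smul_mem {u : M} {Z : Finset (Fin n)} {s : S}
    (hs : ∀ e ∈ s.support, ∀ j ∉ Z, e j = 0) : s • u ∈ mStanleySpace (K := K) u Z := by
  rw [smul_eq_sum]
  exact Submodule.sum_mem _ fun e he =>
    Submodule.smul_mem _ _ (mem_stanley_of u Z (hs e he))

lemma annN_eq_zero (gr : Multigrading n K M) {N : Submodule S M} (hN : IsGradedSub gr N)
    {u : M} {a₀ : Fin n → ℤ} (hu : u ∈ gr.grade a₀)
    (hKP : ∀ e : Fin n →₀ ℕ, (monomial e (1 : K) : S) • u ∈ N →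
      ∃ j, e j ≠ 0 ∧ (X j : S) • u ∈ N)
    {Z : Finset (Fin n)} (hZ : ∀ j ∈ Z, (X j : S) • u ∉ N)
    {s : S} (hs : s • u ∈ N) (hsupp : ∀ e ∈ s.support, ∀ j ∉ Z, e j = 0) : s = 0 := by
  by_contra h0
  obtain ⟨e, he⟩ := Finset.nonempty_iff_ne_empty.mpr
    (fun h => h0 (MvPolynomial.support_eq_empty.mp h))
  have hmon := monomial_mem_annN gr hN hu (mem_annN.mpr hs) he
  obtain ⟨j, hj, hXj⟩ := hKP e hmon
  by_cases hjZ : j ∈ Z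
  · exact hZ j hjZ hXj
  · exact hj (hsupp e he j hjZ)

lemma stanley_disjoint (gr : Multigrading n K M) {N : Submodule S M}
    (hN : IsGradedSub gr N) {u : M} {a₀ : Fin n → ℤ} (hu : u ∈ gr.grade a₀)
    (hKP : ∀ e : Fin n →₀ ℕ, (monomial e (1 : K) : S) • u ∈ N →
      ∃ j, e j ≠ 0 ∧ (X j : S) • u ∈ N)
    {Z : Finset (Fin n)} (hZ : ∀ j ∈ Z, (X j : S) • u ∉ N) :
    Disjoint (N.restrictScalars K) (mStanleySpace (K := K) u Z) := by
  rw [Submodule.disjoint_def]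
  intro v hvN hvS
  obtain ⟨s, hsupp, rfl⟩ := stanley_elem hvS
  rw [annN_eq_zero gr hN hu hKP hZ hvN hsupp, zero_smul]

lemma stanley_free (gr : Multigrading n K M) {N : Submodule S M} (hN : IsGradedSub gr N)
    {u : M} {a₀ : Fin n → ℤ} (hu : u ∈ gr.grade a₀)
    (hKP : ∀ e : Fin n →₀ ℕ, (monomial e (1 : K) : S) • u ∈ N →
      ∃ j, e j ≠ 0 ∧ (X j : S) • u ∈ N)
    {Z : Finset (Fin n)} (hZ : ∀ j ∈ Z, (X j : S) • u ∉ N) :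
    LinearIndependent K fun e : {e : Fin n →₀ ℕ // ∀ j ∉ Z, e j = 0} =>
      (monomial (e : Fin n →₀ ℕ) (1 : K) : S) • u := by
  classical
  rw [linearIndependent_iff']
  intro t g hsum i hit
  set s : S := ∑ i' ∈ t, monomial (i' : Fin n →₀ ℕ) (g i') with hsdef
  have hsu : s • u = 0 := by
    rw [hsdef, Finset.sum_smul, ← hsum]
    exact Finset.sum_congr rfl fun i' _ => monomial_smul_eq _ _ _
  have hsupp : ∀ e ∈ s.support, ∀ j ∉ Z, e j = 0 := by
    intro e he j hj
    obtain ⟨i', hi', he'⟩ := Finset.mem_biUnion.mp (MvPolynomial.support_sum he)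
    have : e = (i' : Fin n →₀ ℕ) := by
      rw [MvPolynomial.support_monomial] at he'
      by_cases hg : g i' = 0
      · rw [if_pos hg] at he'
        exact absurd he' (Finset.notMem_empty e)
      · rw [if_neg hg] at he'
        exact Finset.mem_singleton.mp he'
    rw [this]
    exact i'.2 j hj
  have hs0 : s = 0 := annN_eq_zero gr hN hu hKP hZ (by rw [hsu]; exact N.zero_mem) hsupp
  have hg : g i = s.coeff (i : Fin n →₀ ℕ) := by
    rw [hsdef, MvPolynomial.coeff_sum]
    rw [Finset.sum_congr rfl fun i' _ => MvPolynomial.coeff_monomial _ _ (g i')]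
    rw [Finset.sum_eq_single_of_mem i hit (fun i' _ hne => by
      rw [if_neg (fun hh => hne (Subtype.ext hh))]), if_pos rfl]
  rw [hg, hs0, MvPolynomial.coeff_zero]

lemma sup_restrict_eq {N : Submodule S M} {u : M}
    {Z : Finset (Fin n)} (hZc : ∀ j ∉ Z, (X j : S) • u ∈ N) :
    (N ⊔ Submodule.span S {u}).restrictScalars K
      = N.restrictScalars K ⊔ mStanleySpace (K := K) u Z := by
  apply le_antisymm
  · intro v hv
    obtain ⟨w, hw, z, hz, rfl⟩ := Submodule.mem_sup.mp hv
    obtain ⟨s, rfl⟩ := Submodule.mem_span_singleton.mp hz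
    apply Submodule.add_mem
    · exact Submodule.mem_sup_left hw
    · rw [smul_eq_sum]
      apply Submodule.sum_mem
      intro e he
      by_cases hp : ∀ j ∉ Z, e j = 0
      · exact Submodule.smul_mem _ _ (Submodule.mem_sup_right (mem_stanley_of u Z hp))
      · push_neg at hp
        obtain ⟨j, hjZ, hj⟩ := hp
        apply Submodule.mem_sup_left
        show _ ∈ N
        apply N_ksmul
        rw [← monomial_factor (K := K) hj, ← smul_smul]
        exact N.smul_mem _ (hZc j hjZ)
  · apply sup_le
    · exact fun v hv => Submodule.mem_sup_left hv
    · rw [mStanleySpace, Submodule.span_le]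
      rintro _ ⟨e, _, rfl⟩
      exact Submodule.mem_sup_right
        (Submodule.smul_mem _ _ (Submodule.mem_span_singleton_self u))

lemma graded_sup (gr : Multigrading n K M) {N : Submodule S M} (hN : IsGradedSub gr N)
    {u : M} {a₀ : Fin n → ℤ} (hu : u ∈ gr.grade a₀) :
    IsGradedSub gr (N ⊔ Submodule.span S {u}) := by
  intro v hv
  obtain ⟨w, hw, z, hz, rfl⟩ := Submodule.mem_sup.mp hv
  obtain ⟨s, rfl⟩ := Submodule.mem_span_singleton.mp hz
  apply Submodule.add_mem
  · have hle : N.restrictScalars K ≤ (N ⊔ Submodule.span S {u}).restrictScalars K :=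
      fun x hx => Submodule.mem_sup_left hx
    exact (iSup_mono fun a => inf_le_inf hle le_rfl) (hN hw)
  · rw [smul_eq_sum]
    apply Submodule.sum_mem
    intro e he
    apply Submodule.mem_iSup_of_mem (a₀ + fun i => (e i : ℤ))
    refine Submodule.mem_inf.mpr ⟨?_, Submodule.smul_mem _ _ (gr.toZdeg_mem hu e)⟩
    exact N_ksmul (N := N ⊔ Submodule.span S {u})
      (Submodule.mem_sup_right
        (Submodule.smul_mem _ _ (Submodule.mem_span_singleton_self u))) _

/-- A Stanley decomposition of `M` relative to a graded submodule `N`. -/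
structure PartialDec (gr : Multigrading n K M) (N : Submodule S M) where
  m : ℕ
  u : Fin m → M
  deg : Fin m → (Fin n → ℤ)
  Z : Fin m → Finset (Fin n)
  homog : ∀ i, u i ∈ gr.grade (deg i)
  free : ∀ i, LinearIndependent K fun e : {e : Fin n →₀ ℕ // ∀ j ∉ Z i, e j = 0} =>
    (monomial (e : Fin n →₀ ℕ) (1 : K) : MvPolynomial (Fin n) K) • u i
  indep : iSupIndep (Option.elim' (N.restrictScalars K)
    fun i => mStanleySpace (K := K) (u i) (Z i))
  sup : N.restrictScalars K ⊔ (⨆ i, mStanleySpace (K := K) (u i) (Z i)) = ⊤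

lemma iSup_fin_cons {m : ℕ} {α : Type*} [CompleteLattice α] (g : Fin (m + 1) → α) :
    (⨆ i, g i) = g 0 ⊔ ⨆ i : Fin m, g i.succ := by
  apply le_antisymm
  · apply iSup_le
    intro i
    induction i using Fin.cases with
    | zero => exact le_sup_left
    | succ j => exact le_sup_of_le_right (le_iSup (fun i : Fin m => g i.succ) j)
  · exact sup_le (le_iSup g 0) (iSup_le fun i => le_iSup g i.succ)

lemma partialDec_of_top (gr : Multigrading n K M) :
    Nonempty (PartialDec gr (⊤ : Submodule S M)) := by
  refine ⟨⟨0, Fin.elim0, Fin.elim0, Fin.elim0, fun i => i.elim0, fun i => i.elim0, ?_, ?_⟩⟩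
  · rw [iSupIndep_def]
    intro o
    match o with
    | Option.none =>
      have hb : (⨆ (o' : Option (Fin 0)) (_ : o' ≠ none),
          Option.elim' ((⊤ : Submodule S M).restrictScalars K)
            (fun i => mStanleySpace (K := K) (Fin.elim0 i : M) (Fin.elim0 i : Finset (Fin n))) o') ≤ ⊥ := by
        apply iSup₂_le
        intro o' ho'
        match o' with
        | Option.none => exact absurd rfl ho'
        | Option.some i => exact i.elim0
      rw [le_bot_iff.mp hb]
      exact disjoint_bot_right
    | Option.some i => exact i.elim0
  · have h : (⊤ : Submodule S M).restrictScalars K = ⊤ := by ext x; simp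
    rw [h]
    exact top_sup_eq _

lemma partialDec_step (gr : Multigrading n K M) {N N' : Submodule S M}
    {u : M} {a₀ : Fin n → ℤ} {Z : Finset (Fin n)} (hu : u ∈ gr.grade a₀)
    (hfree : LinearIndependent K fun e : {e : Fin n →₀ ℕ // ∀ j ∉ Z, e j = 0} =>
      (monomial (e : Fin n →₀ ℕ) (1 : K) : S) • u)
    (hdisj : Disjoint (N.restrictScalars K) (mStanleySpace (K := K) u Z))
    (hsup : N'.restrictScalars K = N.restrictScalars K ⊔ mStanleySpace (K := K) u Z)
    (dec' : PartialDec gr N') : Nonempty (PartialDec gr N) := by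
  classical
  set A := N.restrictScalars K with hA
  set B := mStanleySpace (K := K) u Z with hB
  set f : Fin dec'.m → Submodule K M :=
    fun i => mStanleySpace (K := K) (dec'.u i) (dec'.Z i) with hf
  set T := ⨆ i, f i with hT
  have h1 : Disjoint (N'.restrictScalars K) T :=
    (iSupIndep_def.mp dec'.indep none).mono_right
      (iSup_le fun i => le_iSup₂_of_le (some i) (Option.some_ne_none i) le_rfl)
  have h2 : ∀ i, Disjoint (f i)
      (N'.restrictScalars K ⊔ ⨆ j, ⨆ _ : j ≠ i, f j) := fun i =>
    (iSupIndep_def.mp dec'.indep (some i)).mono_right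
      (sup_le (le_iSup₂_of_le none (by simp) le_rfl)
        (iSup₂_le fun j hj => le_iSup₂_of_le (some j) (by simpa using hj) le_rfl))
  have hABT : Disjoint (A ⊔ B) T := hsup ▸ h1
  refine ⟨⟨dec'.m + 1, Fin.cons (α := fun _ => M) u dec'.u, Fin.cons (α := fun _ => (Fin n → ℤ)) a₀ dec'.deg, Fin.cons (α := fun _ => Finset (Fin n)) Z dec'.Z,
    ?_, ?_, ?_, ?_⟩⟩
  · intro i
    induction i using Fin.cases with
    | zero => exact hu
    | succ j => exact dec'.homog j
  · intro i
    induction i using Fin.cases with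
    | zero => exact hfree
    | succ j => exact dec'.free j
  · have hfam : (Option.elim' A
        fun i => mStanleySpace (K := K) (Fin.cons (α := fun _ => M) u dec'.u i) (Fin.cons (α := fun _ => Finset (Fin n)) Z dec'.Z i))
        = Option.elim' A (Fin.cons (α := fun _ => Submodule K M) B f) := by
      funext o
      match o with
      | Option.none => rfl
      | Option.some i =>
        induction i using Fin.cases with
        | zero => simp [hB]
        | succ j => simp [hf]
    rw [hfam, iSupIndep_def]
    intro o
    match o with
    | Option.none =>
      have hb : (⨆ (o' : Option (Fin (dec'.m + 1))) (_ : o' ≠ none),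
          Option.elim' A (Fin.cons (α := fun _ => Submodule K M) B f) o') ≤ B ⊔ T := by
        apply iSup₂_le
        intro o' ho'
        match o' with
        | Option.none => exact absurd rfl ho'
        | Option.some k =>
          induction k using Fin.cases with
          | zero => exact le_sup_left
          | succ j => exact le_sup_of_le_right (le_iSup f j)
      exact (hdisj.disjoint_sup_right_of_disjoint_sup_left hABT).mono_right hb
    | Option.some i =>
      induction i using Fin.cases with
      | zero =>
        have hb : (⨆ (o' : Option (Fin (dec'.m + 1))) (_ : o' ≠ some 0),
            Option.elim' A (Fin.cons (α := fun _ => Submodule K M) B f) o') ≤ A ⊔ T := by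
          apply iSup₂_le
          intro o' ho'
          match o' with
          | Option.none => exact le_sup_left
          | Option.some k =>
            induction k using Fin.cases with
            | zero => exact absurd rfl ho'
            | succ j => exact le_sup_of_le_right (le_iSup f j)
        have hBAT : Disjoint B (A ⊔ T) :=
          hdisj.symm.disjoint_sup_right_of_disjoint_sup_left (by rwa [sup_comm A B] at hABT)
        exact (by simpa using hBAT.mono_right hb :
          Disjoint (Option.elim' A (Fin.cons (α := fun _ => Submodule K M) B f) (some 0)) _)
      | succ j =>
        have hb : (⨆ (o' : Option (Fin (dec'.m + 1))) (_ : o' ≠ some j.succ),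
            Option.elim' A (Fin.cons (α := fun _ => Submodule K M) B f) o')
            ≤ N'.restrictScalars K ⊔ ⨆ k, ⨆ _ : k ≠ j, f k := by
          apply iSup₂_le
          intro o' ho'
          match o' with
          | Option.none => exact le_sup_of_le_left (by rw [hsup]; exact le_sup_left)
          | Option.some k =>
            induction k using Fin.cases with
            | zero => exact le_sup_of_le_left (by rw [hsup]; exact le_sup_right)
            | succ l =>
              have hlj : l ≠ j := fun h => ho' (by rw [h])
              exact le_sup_of_le_right (le_iSup₂_of_le l hlj le_rfl)
        exact (by simpa using (h2 j).mono_right hb :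
          Disjoint (Option.elim' A (Fin.cons (α := fun _ => Submodule K M) B f) (some j.succ)) _)
  · have hsup2 : (⨆ i : Fin (dec'.m + 1),
        mStanleySpace (K := K) (Fin.cons (α := fun _ => M) u dec'.u i) (Fin.cons (α := fun _ => Finset (Fin n)) Z dec'.Z i)) = B ⊔ T := by
      rw [iSup_fin_cons]
      simp only [Fin.cons_zero, Fin.cons_succ]
      rfl
    rw [hsup2, ← sup_assoc, ← hsup]
    exact dec'.sup

lemma partialDec_all (gr : Multigrading n K M)
    [Module.Finite (MvPolynomial (Fin n) K) M] :
    ∀ N : Submodule S M, IsGradedSub gr N → Nonempty (PartialDec gr N) := by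
  have wf : WellFounded ((· > ·) : Submodule S M → Submodule S M → Prop) :=
    isNoetherian_iff.mp inferInstance
  intro N
  induction N using WellFounded.induction wf with
  | _ N ih =>
  intro hN
  by_cases htop : N = ⊤
  · subst htop
    exact partialDec_of_top gr
  obtain ⟨u, a₀, hu, huN, hKP⟩ := exists_compatible gr hN htop
  classical
  set Z : Finset (Fin n) := Finset.univ.filter (fun j => (X j : S) • u ∉ N) with hZdef
  have hZ : ∀ j ∈ Z, (X j : S) • u ∉ N := fun j hj => (Finset.mem_filter.mp hj).2
  have hZc : ∀ j ∉ Z, (X j : S) • u ∈ N := fun j hj => by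
    by_contra h
    exact hj (Finset.mem_filter.mpr ⟨Finset.mem_univ j, h⟩)
  have hlt : N < N ⊔ Submodule.span S {u} :=
    lt_of_le_of_ne le_sup_left (fun h => huN (by
      rw [h]
      exact Submodule.mem_sup_right (Submodule.mem_span_singleton_self u)))
  obtain ⟨dec'⟩ := ih (N ⊔ Submodule.span S {u}) hlt (graded_sup gr hN hu)
  exact partialDec_step gr hu (stanley_free gr hN hu hKP hZ)
    (stanley_disjoint gr hN hu hKP hZ) (sup_restrict_eq hZc) dec'

end Aux

/-- **Lemma.** Every finitely generated `ℤⁿ`-graded module over `S = K[x_1,…,x_n]`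
admits a Stanley decomposition. -/
theorem exists_stanley_decomposition
    {n : ℕ} {K : Type} [Field K] {M : Type} [AddCommGroup M] [Module K M]
    [Module (MvPolynomial (Fin n) K) M] [IsScalarTower K (MvPolynomial (Fin n) K) M]
    [Module.Finite (MvPolynomial (Fin n) K) M]
    (gr : Multigrading n K M) :
    Nonempty (MStanleyDec gr) := by
  obtain ⟨D⟩ := partialDec_all gr ⊥ (fun v hv => by
    have hv0 : v = (0 : M) := by simpa using hv
    rw [hv0]
    exact Submodule.zero_mem _)
  refine ⟨⟨D.m, D.u, D.deg, D.Z, D.homog, D.free, ?_⟩⟩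
  rw [DirectSum.isInternal_submodule_iff_iSupIndep_and_iSup_eq_top]
  constructor
  · exact D.indep.comp (Option.some_injective (Fin D.m))
  · have hsup := D.sup
    rw [show ((⊥ : Submodule (MvPolynomial (Fin n) K) M).restrictScalars K) = ⊥ from by
      ext x; simp] at hsup
    rwa [bot_sup_eq] at hsup

end StanleyPaper
end

section
/- Let M be a finitely generated ℤ^n-graded module over S = K[x_1,…,x_n] and let D : M = ⊕_{i=1}^m u_iK[Z_i] be a Stanley decomposition of M. Then D is induced by a prime filtration of M if and only if, after a suitable relabeling of the summands, M_j = ⊕_{i=1}^j u_iK[Z_i] is a ℤ^n-graded S-submodule of M for every j = 1,…,m. -/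
open MvPolynomial

namespace StanleyPaper

variable (n : ℕ) (K : Type) [Field K]
variable (M : Type) [AddCommGroup M] [Module K M]
  [Module (MvPolynomial (Fin n) K) M] [IsScalarTower K (MvPolynomial (Fin n) K) M]

variable {n K M}

/-- The set `Z_i = {x_j : x_j ∉ P i}` of variables attached to the `i`-th prime of a
prime filtration. -/
noncomputable def MPrimeFiltration.inducedZ {n : ℕ} {K : Type} [Field K] {M : Type} [AddCommGroup M]
    [Module K M] [Module (MvPolynomial (Fin n) K) M]
    [IsScalarTower K (MvPolynomial (Fin n) K) M] {gr : Multigrading n K M}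
    (F : MPrimeFiltration gr) (i : Fin F.m) : Finset (Fin n) :=
  open Classical in Finset.univ.filter fun j => (X j : MvPolynomial (Fin n) K) ∉ F.P i

/-- The Stanley decomposition `D` is induced by the prime filtration `F`: up to a
relabeling, the Stanley spaces of `D` are exactly the spaces `u_i K[Z_i]` coming from
the filtration, with `u_i` the chosen homogeneous generator of `M_i/M_{i-1}` and
`Z_i = {x_j : x_j ∉ P_i}`. -/
def MPrimeFiltration.Induces {n : ℕ} {K : Type} [Field K] {M : Type} [AddCommGroup M]
    [Module K M] [Module (MvPolynomial (Fin n) K) M]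
    [IsScalarTower K (MvPolynomial (Fin n) K) M] {gr : Multigrading n K M}
    (F : MPrimeFiltration gr) (D : MStanleyDec gr) : Prop :=
  ∃ e : Fin D.m ≃ Fin F.m, ∀ i, D.u i = F.u (e i) ∧ D.deg i = F.deg (e i) ∧
    D.Z i = F.inducedZ (e i)


/-! ### Auxiliary lemmas -/

section Aux

set_option linter.unusedSectionVars false

lemma monomial_smul_mem_mSS (u : M) (Z : Finset (Fin n)) (e : Fin n →₀ ℕ)
    (he : ∀ j ∉ Z, e j = 0) :
    (monomial e (1:K) : MvPolynomial (Fin n) K) • u ∈ mStanleySpace (K := K) u Z :=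
  Submodule.subset_span ⟨e, he, rfl⟩

lemma self_mem_mSS (u : M) (Z : Finset (Fin n)) : u ∈ mStanleySpace (K := K) u Z := by
  have h := monomial_smul_mem_mSS (K := K) u Z 0 (fun j _ => rfl)
  rwa [monomial_zero', C_1, one_smul] at h

lemma smul_decomp (s : MvPolynomial (Fin n) K) (u : M) :
    s • u = ∑ d ∈ s.support,
      coeff d s • ((monomial d (1:K) : MvPolynomial (Fin n) K) • u) := by
  conv_lhs => rw [← s.support_sum_monomial_coeff]
  rw [Finset.sum_smul]
  refine Finset.sum_congr rfl fun d _ => ?_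
  rw [show (monomial d (coeff d s) : MvPolynomial (Fin n) K)
      = coeff d s • monomial d (1:K) by rw [smul_monomial, smul_eq_mul, mul_one],
    smul_assoc]

lemma monomial_mem_of_X_mem {P : Ideal (MvPolynomial (Fin n) K)} {k : Fin n}
    (hX : (X k : MvPolynomial (Fin n) K) ∈ P) {d : Fin n →₀ ℕ} (hd : d k ≠ 0) :
    (monomial d (1:K) : MvPolynomial (Fin n) K) ∈ P := by
  have h1 : Finsupp.single k 1 ≤ d := by
    rw [Finsupp.single_le_iff]; omega
  have h2 : (monomial d (1:K) : MvPolynomial (Fin n) K)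
      = monomial (d - Finsupp.single k 1) 1 * X k := by
    rw [show (X k : MvPolynomial (Fin n) K) = monomial (Finsupp.single k 1) 1 from rfl,
      monomial_mul, mul_one, tsub_add_cancel_of_le h1]
  rw [h2]
  exact Ideal.mul_mem_left _ _ hX

lemma X_mem_span_image_iff {W : Finset (Fin n)} {j : Fin n} :
    (X j : MvPolynomial (Fin n) K) ∈
      Ideal.span ((fun k => (X k : MvPolynomial (Fin n) K)) '' ↑W) ↔ j ∈ W := by
  classical
  constructor
  · intro h
    by_contra hj
    let φ : MvPolynomial (Fin n) K →ₐ[K] MvPolynomial (Fin n) K :=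
      aeval (fun k => if k ∈ W then 0 else X k)
    have hle : Ideal.span ((fun k => (X k : MvPolynomial (Fin n) K)) '' ↑W)
        ≤ RingHom.ker (φ : MvPolynomial (Fin n) K →+* MvPolynomial (Fin n) K) := by
      rw [Ideal.span_le]
      rintro _ ⟨k, hk, rfl⟩
      simp [φ, RingHom.mem_ker, aeval_X, Finset.mem_coe.mp hk]
    have h0 : φ (X j) = 0 := hle h
    rw [show φ (X j) = if j ∈ W then 0 else X j from aeval_X _ j, if_neg hj] at h0
    exact X_ne_zero j h0
  · intro h; exact Ideal.subset_span ⟨j, h, rfl⟩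

/-- Splitting off a single index from an `iSup` of submodules. -/
lemma iSup_split_single {ι : Type*} (T : ι → Submodule K M) (i0 : ι) :
    (⨆ i, T i) = T i0 ⊔ ⨆ i, ⨆ _ : i ≠ i0, T i := by
  classical
  apply le_antisymm
  · refine iSup_le fun i => ?_
    by_cases h : i = i0
    · subst h; exact le_sup_left
    · exact le_sup_of_le_right (le_iSup₂ (f := fun i _ => T i) i h)
  · exact sup_le (le_iSup T i0) (iSup₂_le fun i _ => le_iSup T i)

/-- Key graded-component extraction: if a homogeneous element `v` of degree `d0`
decomposes as `a + b` with `a` in the "graded part" of `Q` and `b` supported in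
degrees `≠ d0`, then `v ∈ Q`. -/
lemma mem_of_graded_decomp (gr : Multigrading n K M) {Q : Submodule K M}
    {d0 : Fin n → ℤ} {v a b : M} (hv : v ∈ gr.grade d0) (hab : v = a + b)
    (ha : a ∈ ⨆ a' : Fin n → ℤ, (Q ⊓ gr.grade a'))
    (hb : b ∈ ⨆ a' : Fin n → ℤ, ⨆ _ : a' ≠ d0, gr.grade a') : v ∈ Q := by
  classical
  rw [iSup_split_single (fun a' => Q ⊓ gr.grade a') d0] at ha
  obtain ⟨a0, ha0, a1, ha1, rfl⟩ := Submodule.mem_sup.mp ha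
  have ha1' : a1 ∈ ⨆ a' : Fin n → ℤ, ⨆ _ : a' ≠ d0, gr.grade a' := by
    exact (iSup₂_mono (κ := fun _ => _) fun (a' : Fin n → ℤ) (_ : a' ≠ d0) => (inf_le_right : Q ⊓ gr.grade a' ≤ gr.grade a')) ha1
  have hsub : v - a0 ∈ gr.grade d0 := sub_mem hv ha0.2
  have hsub' : v - a0 ∈ ⨆ a' : Fin n → ℤ, ⨆ _ : a' ≠ d0, gr.grade a' := by
    have hv' : v - a0 = a1 + b := by rw [hab]; abel
    rw [hv']
    exact add_mem ha1' hb
  have hdis := gr.internal.submodule_iSupIndep d0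
  have h0 : v - a0 = 0 := Submodule.disjoint_def.mp hdis _ hsub hsub'
  have hva : v = a0 := by rwa [sub_eq_zero] at h0
  rw [hva]; exact ha0.1

end Aux


section Aux2

set_option linter.unusedSectionVars false

variable {m : ℕ}

lemma Q_zero (T : Fin m → Submodule K M) (σ : Equiv.Perm (Fin m)) :
    (⨆ i, ⨆ _ : (σ i : ℕ) < 0, T i) = ⊥ := by
  simp

lemma Q_succ (T : Fin m → Submodule K M) (σ : Equiv.Perm (Fin m)) {t : ℕ} (ht : t < m) :
    (⨆ i, ⨆ _ : (σ i : ℕ) < t + 1, T i)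
      = (⨆ i, ⨆ _ : (σ i : ℕ) < t, T i) ⊔ T (σ.symm ⟨t, ht⟩) := by
  apply le_antisymm
  · refine iSup₂_le fun i hi => ?_
    rcases Nat.lt_succ_iff_lt_or_eq.mp hi with h | h
    · exact le_sup_of_le_left (le_iSup₂ (f := fun i _ => T i) i h)
    · have : i = σ.symm ⟨t, ht⟩ := by
        apply σ.injective
        rw [Equiv.apply_symm_apply]
        exact Fin.ext h
      rw [this]; exact le_sup_right
  · refine sup_le (iSup₂_le fun i h => le_iSup₂ (f := fun i _ => T i) i (Nat.lt_succ_of_lt h)) ?_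
    refine le_iSup₂ (f := fun i _ => T i) (σ.symm ⟨t, ht⟩) ?_
    rw [Equiv.apply_symm_apply]
    exact Nat.lt_succ_of_le (le_of_eq rfl)

lemma Q_of_le (T : Fin m → Submodule K M) (σ : Equiv.Perm (Fin m)) {t t' : ℕ}
    (h : t ≤ t') : (⨆ i, ⨆ _ : (σ i : ℕ) < t, T i) ≤ ⨆ i, ⨆ _ : (σ i : ℕ) < t', T i :=
  iSup_mono fun i => iSup_const_mono (fun hi => lt_of_lt_of_le hi h)

lemma Q_ge (T : Fin m → Submodule K M) (σ : Equiv.Perm (Fin m)) {t : ℕ} (ht : m ≤ t) :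
    (⨆ i, ⨆ _ : (σ i : ℕ) < t, T i) = ⨆ i, T i := by
  exact iSup_congr fun i => iSup_pos (lt_of_lt_of_le (σ i).isLt ht)

/-- Turn a `K`-subspace closed under the `S`-action into an `S`-submodule. -/
def extendScalars (Q : Submodule K M)
    (h : ∀ (s : MvPolynomial (Fin n) K) (x : M), x ∈ Q → s • x ∈ Q) :
    Submodule (MvPolynomial (Fin n) K) M where
  carrier := Q
  add_mem' := Q.add_mem
  zero_mem' := Q.zero_mem
  smul_mem' := fun s x hx => h s x hx

@[simp] lemma mem_extendScalars {Q : Submodule K M}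
    {h : ∀ (s : MvPolynomial (Fin n) K) (x : M), x ∈ Q → s • x ∈ Q} {x : M} :
    x ∈ extendScalars Q h ↔ x ∈ Q := Iff.rfl

end Aux2


section Fwd
set_option linter.unusedSectionVars false
set_option maxHeartbeats 800000

lemma perm_of_filtration {gr : Multigrading n K M} (D : MStanleyDec gr)
    (F : MPrimeFiltration gr) (hF : F.Induces D) :
    ∃ σ : Equiv.Perm (Fin D.m), ∀ t : ℕ, ∀ s : MvPolynomial (Fin n) K,
      ∀ x ∈ (⨆ i : Fin D.m, ⨆ _ : (σ i : ℕ) < t, mStanleySpace (K := K) (D.u i) (D.Z i)),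
        s • x ∈ (⨆ i : Fin D.m, ⨆ _ : (σ i : ℕ) < t,
          mStanleySpace (K := K) (D.u i) (D.Z i)) := by
  classical
  obtain ⟨e, he⟩ := hF
  have hm : D.m = F.m := Fin.equiv_iff_eq.mp ⟨e⟩
  set σ : Equiv.Perm (Fin D.m) := e.trans (finCongr hm.symm) with hσdef
  have hσval : ∀ i, (σ i : ℕ) = (e i : ℕ) := fun i => rfl
  set Sp : Fin D.m → Submodule K M :=
    (fun i => mStanleySpace (K := K) (D.u i) (D.Z i)) with hSp
  have key : ∀ t : ℕ, ∀ ht : t ≤ F.m,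
      (F.N ⟨t, Nat.lt_succ_of_le ht⟩).restrictScalars K
        = ⨆ i, ⨆ _ : (σ i : ℕ) < t, Sp i := by
    intro t
    induction t with
    | zero =>
      intro ht
      rw [show (⟨0, Nat.lt_succ_of_le ht⟩ : Fin (F.m+1)) = 0 from rfl, F.bot,
        Q_zero Sp σ]
      rfl
    | succ t ih =>
      intro ht
      have htm : t < F.m := ht
      have htD : t < D.m := by omega
      set jF : Fin F.m := ⟨t, htm⟩ with hjF
      set i0 : Fin D.m := σ.symm ⟨t, htD⟩ with hi0
      have hσi0 : σ i0 = ⟨t, htD⟩ := Equiv.apply_symm_apply σ _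
      have hei0 : e i0 = jF := by
        apply Fin.ext
        rw [← hσval i0, hσi0]
      have hu : D.u i0 = F.u jF := by rw [(he i0).1, hei0]
      have hZ : D.Z i0 = F.inducedZ jF := by rw [(he i0).2.2, hei0]
      have hgen := F.gen jF
      have hsucc : (jF.succ : Fin (F.m + 1)) = ⟨t+1, Nat.succ_lt_succ htm⟩ := rfl
      have hcast : (jF.castSucc : Fin (F.m + 1)) = ⟨t, Nat.lt_succ_of_le (le_of_lt htm)⟩ := rfl
      rw [hsucc, hcast] at hgen
      have ihe := ih (le_of_lt htm)
      rw [Q_succ Sp σ htD, ← hi0]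
      rw [show (⟨t+1, Nat.lt_succ_of_le ht⟩ : Fin (F.m+1)) = ⟨t+1, Nat.succ_lt_succ htm⟩ from rfl,
        hgen]
      apply le_antisymm
      · intro x hx
        rw [Submodule.restrictScalars_mem] at hx
        obtain ⟨a, ha, b, hb, rfl⟩ := Submodule.mem_sup.mp hx
        have haQ : a ∈ (⨆ i, ⨆ _ : (σ i : ℕ) < t, Sp i) := by
          rw [← ihe]; exact ha
        obtain ⟨s, rfl⟩ := Submodule.mem_span_singleton.mp hb
        refine add_mem (Submodule.mem_sup_left haQ) ?_
        rw [smul_decomp]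
        refine Submodule.sum_mem _ fun d hd => Submodule.smul_mem _ _ ?_
        by_cases hc : ∀ l ∉ D.Z i0, d l = 0
        · refine Submodule.mem_sup_right ?_
          rw [hSp, ← hu]
          exact monomial_smul_mem_mSS _ _ d hc
        · push_neg at hc
          obtain ⟨k, hk, hdk⟩ := hc
          have hX : (X k : MvPolynomial (Fin n) K) ∈ F.P jF := by
            rw [hZ] at hk
            by_contra hXk
            exact hk (by simp [MPrimeFiltration.inducedZ, hXk])
          have hmem := (F.ann jF (monomial d 1)).mpr (monomial_mem_of_X_mem hX hdk)
          rw [hcast] at hmem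
          refine Submodule.mem_sup_left ?_
          rw [← ihe]
          exact hmem
      · refine sup_le ?_ ?_
        · rw [← ihe]
          intro x hx
          rw [Submodule.restrictScalars_mem] at hx ⊢
          exact Submodule.mem_sup_left hx
        · rw [hSp]
          show mStanleySpace (K := K) (D.u i0) (D.Z i0) ≤ _
          rw [mStanleySpace, Submodule.span_le]
          rintro _ ⟨ee, hee, rfl⟩
          rw [hu]
          exact Submodule.mem_sup_right
            (Submodule.smul_mem _ _ (Submodule.mem_span_singleton_self _))
      done
  refine ⟨σ, fun t s x hx => ?_⟩
  by_cases ht : t ≤ F.m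
  · rw [← key t ht] at hx ⊢
    exact Submodule.smul_mem _ s hx
  · have hDm : D.m ≤ t := by omega
    rw [Q_ge Sp σ hDm] at hx ⊢
    have htop : (⨆ i, Sp i) = ⊤ := D.internal.submodule_iSup_eq_top
    rw [htop]
    trivial

end Fwd


section Bwd
set_option linter.unusedSectionVars false
set_option maxHeartbeats 1600000

lemma filtration_of_perm {gr : Multigrading n K M} (D : MStanleyDec gr)
    (σ : Equiv.Perm (Fin D.m))
    (hσ : ∀ t : ℕ, ∀ s : MvPolynomial (Fin n) K,
      ∀ x ∈ (⨆ i : Fin D.m, ⨆ _ : (σ i : ℕ) < t, mStanleySpace (K := K) (D.u i) (D.Z i)),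
        s • x ∈ (⨆ i : Fin D.m, ⨆ _ : (σ i : ℕ) < t,
          mStanleySpace (K := K) (D.u i) (D.Z i))) :
    ∃ F : MPrimeFiltration gr, F.Induces D := by
  classical
  set Sp : Fin D.m → Submodule K M :=
    (fun i => mStanleySpace (K := K) (D.u i) (D.Z i)) with hSp
  set Q : ℕ → Submodule K M := (fun t => ⨆ i, ⨆ _ : (σ i : ℕ) < t, Sp i) with hQ
  have hσ' : ∀ (t : ℕ) (s : MvPolynomial (Fin n) K) (x : M), x ∈ Q t → s • x ∈ Q t :=
    fun t s x hx => hσ t s x hx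
  have hSpQ : ∀ {i : Fin D.m} {t : ℕ}, (σ i : ℕ) < t → Sp i ≤ Q t :=
    fun {i t} h => le_iSup₂ (f := fun i _ => Sp i) i h
  have hQgraded : ∀ t, Q t ≤ ⨆ a : Fin n → ℤ, (Q t ⊓ gr.grade a) := by
    intro t
    refine iSup₂_le fun i hi => ?_
    show mStanleySpace (K := K) (D.u i) (D.Z i) ≤ _
    rw [mStanleySpace, Submodule.span_le]
    rintro _ ⟨ee, hee, rfl⟩
    refine Submodule.mem_iSup_of_mem (D.deg i + fun j => (ee j : ℤ)) ?_
    exact Submodule.mem_inf.mpr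
      ⟨hSpQ hi (monomial_smul_mem_mSS _ _ ee hee), gr.smul_mem ee _ _ (D.homog i)⟩
  -- the filtration
  set N : Fin (D.m + 1) → Submodule (MvPolynomial (Fin n) K) M :=
    (fun j => extendScalars (Q j.val) (fun s x hx => hσ' j.val s x hx)) with hN
  have hQsucc : ∀ (j : Fin D.m), Q ((j : ℕ) + 1) = Q (j : ℕ) ⊔ Sp (σ.symm j) := by
    intro j
    have h := Q_succ Sp σ j.isLt
    rwa [show (⟨(j : ℕ), j.isLt⟩ : Fin D.m) = j from rfl] at h
  -- membership of `u` in the next step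
  have humem : ∀ j : Fin D.m, D.u (σ.symm j) ∈ Q ((j : ℕ) + 1) := by
    intro j
    rw [hQsucc j]
    exact Submodule.mem_sup_right (self_mem_mSS _ _)
  -- X_k • u ∈ Q j for k outside Z (the graded-component argument)
  have hXmem : ∀ (j : Fin D.m), ∀ k ∉ D.Z (σ.symm j),
      (X k : MvPolynomial (Fin n) K) • D.u (σ.symm j) ∈ Q (j : ℕ) := by
    intro j k hk
    set i0 : Fin D.m := σ.symm j with hi0
    have hXu : (X k : MvPolynomial (Fin n) K) • D.u i0 ∈ Q ((j : ℕ) + 1) :=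
      hσ' _ _ _ (humem j)
    rw [hQsucc j] at hXu
    obtain ⟨a, ha, b, hb, hab⟩ := Submodule.mem_sup.mp hXu
    set d0 : Fin n → ℤ :=
      (D.deg i0 + fun i => ((Finsupp.single k 1 : Fin n →₀ ℕ) i : ℤ)) with hd0
    have hv : (X k : MvPolynomial (Fin n) K) • D.u i0 ∈ gr.grade d0 :=
      gr.smul_mem (Finsupp.single k 1) _ _ (D.homog i0)
    have hbmem : b ∈ ⨆ a' : Fin n → ℤ, ⨆ _ : a' ≠ d0, gr.grade a' := by
      have hle : Sp i0 ≤ ⨆ a' : Fin n → ℤ, ⨆ _ : a' ≠ d0, gr.grade a' := by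
        show mStanleySpace (K := K) (D.u i0) (D.Z i0) ≤ _
        rw [mStanleySpace, Submodule.span_le]
        rintro _ ⟨ee, hee, rfl⟩
        have hne : (D.deg i0 + fun i => (ee i : ℤ)) ≠ d0 := by
          intro hfun
          have hck := congrFun hfun k
          rw [hd0] at hck
          simp only [Pi.add_apply, Finsupp.single_eq_same, hee k hk] at hck
          omega
        exact Submodule.mem_iSup_of_mem _
          (Submodule.mem_iSup_of_mem hne (gr.smul_mem ee _ _ (D.homog i0)))
      exact hle hb
    exact mem_of_graded_decomp gr hv hab.symm (hQgraded _ ha) hbmem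
  -- the ideal direction: P ⊆ annihilator
  have hPle : ∀ (j : Fin D.m) (p : MvPolynomial (Fin n) K),
      p ∈ Ideal.span ((fun kk => (X kk : MvPolynomial (Fin n) K)) '' ↑((D.Z (σ.symm j))ᶜ)) →
      p • D.u (σ.symm j) ∈ Q (j : ℕ) := by
    intro j p hp
    have hle : Ideal.span ((fun kk => (X kk : MvPolynomial (Fin n) K)) '' ↑((D.Z (σ.symm j))ᶜ))
        ≤ Submodule.comap
            (LinearMap.toSpanSingleton (MvPolynomial (Fin n) K) M (D.u (σ.symm j)))
            (extendScalars (Q (j : ℕ)) (fun s x hx => hσ' (j : ℕ) s x hx)) := by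
      rw [Ideal.span_le]
      rintro _ ⟨k, hk, rfl⟩
      have hk' : k ∉ D.Z (σ.symm j) := by
        have := Finset.mem_coe.mp hk
        simpa using this
      simp only [SetLike.mem_coe, Submodule.mem_comap, LinearMap.toSpanSingleton_apply]
      exact hXmem j k hk'
    have := hle hp
    simpa using this
  refine ⟨⟨D.m, N, fun j => D.u (σ.symm j), fun j => D.deg (σ.symm j),
    fun j => Ideal.span ((fun kk => (X kk : MvPolynomial (Fin n) K)) '' ↑((D.Z (σ.symm j))ᶜ)),
    ?_, ?_, ?_, ?_, ?_, ?_, ?_⟩, ?_⟩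
  · -- bot
    apply Submodule.ext
    intro x
    rw [hN, mem_extendScalars]
    show x ∈ (⨆ i, ⨆ _ : (σ i : ℕ) < ((0 : Fin (D.m + 1)) : ℕ), Sp i) ↔ _
    rw [show ((0 : Fin (D.m + 1)) : ℕ) = 0 from rfl, Q_zero Sp σ]
    simp
  · -- top
    apply Submodule.ext
    intro x
    rw [hN, mem_extendScalars]
    show x ∈ (⨆ i, ⨆ _ : (σ i : ℕ) < ((Fin.last D.m : Fin (D.m + 1)) : ℕ), Sp i) ↔ _
    rw [show ((Fin.last D.m : Fin (D.m + 1)) : ℕ) = D.m from rfl, Q_ge Sp σ le_rfl]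
    rw [show (⨆ i, Sp i) = ⊤ from D.internal.submodule_iSup_eq_top]
    simp
  · -- graded
    intro j
    show Submodule.restrictScalars K (N j) ≤ _
    have hrs : Submodule.restrictScalars K (N j) = Q (j : ℕ) := rfl
    rw [hrs]
    exact hQgraded _
  · -- homog
    intro j
    exact D.homog _
  · -- gen
    intro j
    apply le_antisymm
    · intro x hx
      rw [hN, mem_extendScalars, Fin.val_succ, hQsucc j] at hx
      obtain ⟨a, ha, b, hb, rfl⟩ := Submodule.mem_sup.mp hx
      refine add_mem (Submodule.mem_sup_left ?_) (Submodule.mem_sup_right ?_)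
      · rw [hN, mem_extendScalars, Fin.coe_castSucc]
        exact ha
      · have hle : Sp (σ.symm j) ≤ (Submodule.span (MvPolynomial (Fin n) K)
            {D.u (σ.symm j)}).restrictScalars K := by
          show mStanleySpace (K := K) (D.u (σ.symm j)) (D.Z (σ.symm j)) ≤ _
          rw [mStanleySpace, Submodule.span_le]
          rintro _ ⟨ee, hee, rfl⟩
          exact Submodule.smul_mem _ _ (Submodule.mem_span_singleton_self _)
        exact hle hb
    · refine sup_le ?_ ?_
      · intro x hx
        rw [hN, mem_extendScalars, Fin.coe_castSucc] at hx
        rw [hN, mem_extendScalars, Fin.val_succ]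
        exact Q_of_le Sp σ (Nat.le_succ _) hx
      · rw [Submodule.span_le]
        intro x hx
        rw [Set.mem_singleton_iff] at hx
        subst hx
        show D.u (σ.symm j) ∈ N j.succ
        rw [hN, mem_extendScalars, Fin.val_succ]
        exact humem j
  · -- ann
    intro j s
    constructor
    · -- hard direction
      intro hs
      rw [hN, mem_extendScalars, Fin.coe_castSucc] at hs
      set i0 : Fin D.m := σ.symm j with hi0
      set sZ : MvPolynomial (Fin n) K :=
        ∑ d ∈ s.support.filter (fun d => ∀ l ∉ D.Z i0, d l = 0),
          monomial d (coeff d s) with hsZ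
      have hrest : s - sZ ∈ Ideal.span
          ((fun kk => (X kk : MvPolynomial (Fin n) K)) '' ↑((D.Z i0)ᶜ)) := by
        have hsplit : s - sZ = ∑ d ∈ s.support.filter (fun d => ¬ ∀ l ∉ D.Z i0, d l = 0),
            monomial d (coeff d s) := by
          conv_lhs => rw [← s.support_sum_monomial_coeff,
            ← Finset.sum_filter_add_sum_filter_not s.support
              (fun d => ∀ l ∉ D.Z i0, d l = 0) (fun d => monomial d (coeff d s))]
          rw [hsZ]
          abel
        rw [hsplit]
        refine Submodule.sum_mem _ fun d hd => ?_
        rw [Finset.mem_filter] at hd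
        have hd2 := hd.2
        push_neg at hd2
        obtain ⟨k, hk, hdk⟩ := hd2
        have hXk : (X k : MvPolynomial (Fin n) K) ∈ Ideal.span
            ((fun kk => (X kk : MvPolynomial (Fin n) K)) '' ↑((D.Z i0)ᶜ)) :=
          Ideal.subset_span ⟨k, by simp [hk], rfl⟩
        rw [show (monomial d (coeff d s) : MvPolynomial (Fin n) K)
          = C (coeff d s) * monomial d 1 by rw [C_mul_monomial, mul_one]]
        exact Ideal.mul_mem_left _ _ (monomial_mem_of_X_mem hXk hdk)
      have hsZQ : sZ • D.u i0 ∈ Q (j : ℕ) := by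
        have heq : sZ • D.u i0 = s • D.u i0 - (s - sZ) • D.u i0 := by
          rw [sub_smul]; abel
        rw [heq]
        exact sub_mem hs (hPle j _ hrest)
      have hsZSp : sZ • D.u i0 ∈ Sp i0 := by
        rw [hsZ, Finset.sum_smul]
        refine Submodule.sum_mem _ fun d hd => ?_
        rw [Finset.mem_filter] at hd
        rw [show (monomial d (coeff d s) : MvPolynomial (Fin n) K)
          = coeff d s • monomial d (1:K) by rw [smul_monomial, smul_eq_mul, mul_one],
          smul_assoc]
        exact Submodule.smul_mem _ _ (monomial_smul_mem_mSS _ _ d hd.2)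
      have hdisj : Disjoint (Q (j : ℕ)) (Sp i0) := by
        have h1 := D.internal.submodule_iSupIndep i0
        refine Disjoint.symm (Disjoint.mono_right ?_ h1)
        refine iSup₂_le fun i hi => ?_
        have hne : i ≠ i0 := by
          intro hii
          rw [hii, hi0, Equiv.apply_symm_apply] at hi
          omega
        exact le_iSup₂ (f := fun i _ => mStanleySpace (K := K) (D.u i) (D.Z i)) i hne
      have h0 : sZ • D.u i0 = 0 := Submodule.disjoint_def.mp hdisj _ hsZQ hsZSp
      -- linear independence: all coefficients of sZ vanish
      have hcoeff : ∀ d ∈ s.support.filter (fun d => ∀ l ∉ D.Z i0, d l = 0),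
          coeff d s = 0 := by
        have hli := D.free i0
        rw [linearIndependent_iff'] at hli
        set tt : Finset {e : Fin n →₀ ℕ // ∀ l ∉ D.Z i0, e l = 0} :=
          s.support.subtype (fun e => ∀ l ∉ D.Z i0, e l = 0) with htt
        have hsum : (∑ x ∈ tt, coeff (x : Fin n →₀ ℕ) s •
            ((monomial (x : Fin n →₀ ℕ) (1:K) : MvPolynomial (Fin n) K) • D.u i0)) = 0 := by
          have hmap := Finset.sum_map
            (s.support.subtype (fun e => ∀ l ∉ D.Z i0, e l = 0))
            (Function.Embedding.subtype _)
            (fun d => coeff d s • ((monomial d (1:K) : MvPolynomial (Fin n) K) • D.u i0))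
          simp only [Function.Embedding.coe_subtype] at hmap
          rw [Finset.subtype_map] at hmap
          rw [htt, ← hmap, ← h0, hsZ, Finset.sum_smul]
          refine Finset.sum_congr rfl fun d hd => ?_
          rw [show (monomial d (coeff d s) : MvPolynomial (Fin n) K)
            = coeff d s • monomial d (1:K) by rw [smul_monomial, smul_eq_mul, mul_one],
            smul_assoc]
        intro d hd
        rw [Finset.mem_filter] at hd
        have := hli tt (fun x => coeff (x : Fin n →₀ ℕ) s) hsum ⟨d, hd.2⟩
          (by rw [htt, Finset.mem_subtype]; exact hd.1)
        exact this
      have hsZ0 : sZ = 0 := by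
        rw [hsZ]
        refine Finset.sum_eq_zero fun d hd => ?_
        rw [hcoeff d hd, monomial_zero]
      have : s = s - sZ := by rw [hsZ0, sub_zero]
      rw [this]
      exact hrest
    · intro hp
      rw [hN, mem_extendScalars, Fin.coe_castSucc]
      exact hPle j s hp
  · -- isPrime
    intro j
    exact ⟨(D.Z (σ.symm j))ᶜ, rfl⟩
  · -- Induces
    refine ⟨σ, fun i => ⟨?_, ?_, ?_⟩⟩
    · simp
    · simp
    · show D.Z i = Finset.univ.filter fun k => (X k : MvPolynomial (Fin n) K) ∉
        Ideal.span ((fun kk => (X kk : MvPolynomial (Fin n) K)) '' ↑((D.Z (σ.symm (σ i)))ᶜ))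
      rw [Equiv.symm_apply_apply]
      ext k
      simp only [Finset.mem_filter, Finset.mem_univ, true_and]
      rw [X_mem_span_image_iff]
      simp

end Bwd

/-- **Proposition.** A Stanley decomposition `D : M = ⊕ᵢ uᵢK[Zᵢ]` of a finitely
generated `ℤⁿ`-graded `S`-module `M` is induced by a prime filtration if and only if,
after a suitable relabeling of the summands, all partial sums `⊕_{i≤j} uᵢK[Zᵢ]` are
(`ℤⁿ`-graded) `S`-submodules of `M`. -/
theorem induced_by_prime_filtration_iff_partial_sums_are_submodules
    {n : ℕ} {K : Type} [Field K] {M : Type} [AddCommGroup M] [Module K M]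
    [Module (MvPolynomial (Fin n) K) M] [IsScalarTower K (MvPolynomial (Fin n) K) M]
    [Module.Finite (MvPolynomial (Fin n) K) M]
    {gr : Multigrading n K M} (D : MStanleyDec gr) :
    (∃ F : MPrimeFiltration gr, F.Induces D) ↔
    (∃ σ : Equiv.Perm (Fin D.m), ∀ t : ℕ, ∀ s : MvPolynomial (Fin n) K,
      ∀ x ∈ (⨆ i : Fin D.m, ⨆ _ : (σ i : ℕ) < t, mStanleySpace (K := K) (D.u i) (D.Z i)),
        s • x ∈ (⨆ i : Fin D.m, ⨆ _ : (σ i : ℕ) < t,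
          mStanleySpace (K := K) (D.u i) (D.Z i))) := by
  constructor
  · rintro ⟨F, hF⟩
    exact perm_of_filtration D F hF
  · rintro ⟨σ, hσ⟩
    exact filtration_of_perm D σ hσ

end StanleyPaper
end

section
/- Let J ⊂ I be monomial ideals of S = K[x_1,…,x_n]. Then fdepth I/J ≥ min{ρ(c) : c ∈ P_{I/J}}, where P_{I/J} is the characteristic poset taken with respect to g equal to the join of all exponent vectors of the minimal generators of I and J. In particular, if I is a squarefree monomial ideal, then fdepth I ≥ min{deg u : u ∈ G(I)}. -/
open MvPolynomial

namespace StanleyPaper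

variable {n : ℕ} {K : Type} [Field K]

/-- The exponent vectors of the minimal monomial generators `G(I)` of a monomial
ideal `I`. -/
def minGens {n : ℕ} {K : Type} [Field K] (I : Ideal (MvPolynomial (Fin n) K)) :
    Set (Fin n →₀ ℕ) :=
  {a | (monomial a (1 : K) : MvPolynomial (Fin n) K) ∈ I ∧
    ∀ b < a, (monomial b (1 : K) : MvPolynomial (Fin n) K) ∉ I}

noncomputable section Aux

def spanMono (K : Type) [Field K] {n : ℕ} (E : Set (Fin n →₀ ℕ)) :
    Submodule K (MvPolynomial (Fin n) K) :=
  Submodule.span K ((fun a => (monomial a (1 : K) : MvPolynomial (Fin n) K)) '' E)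

def suppSubmodule (K : Type) [Field K] {n : ℕ} (E : Set (Fin n →₀ ℕ)) :
    Submodule K (MvPolynomial (Fin n) K) where
  carrier := {p | ∀ b ∈ p.support, b ∈ E}
  add_mem' := by
    classical
    intro p q hp hq b hb
    rcases Finset.mem_union.1 (MvPolynomial.support_add hb) with h | h
    exacts [hp b h, hq b h]
  zero_mem' := by simp
  smul_mem' := by
    intro c p hp b hb
    exact hp b (MvPolynomial.support_smul hb)

lemma mem_spanMono {E : Set (Fin n →₀ ℕ)} {p : MvPolynomial (Fin n) K} :
    p ∈ spanMono K E ↔ ∀ b ∈ p.support, b ∈ E := by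
  constructor
  · intro hp
    have hle : spanMono K E ≤ suppSubmodule K E := by
      rw [spanMono, Submodule.span_le]
      rintro q ⟨a, ha, rfl⟩ b hb
      classical
      rw [MvPolynomial.support_monomial, if_neg (one_ne_zero (α := K))] at hb
      rw [Finset.mem_singleton] at hb
      subst hb; exact ha
    exact hle hp
  · intro h
    have hp : p = ∑ v ∈ p.support, monomial v (coeff v p) :=
      (support_sum_monomial_coeff p).symm
    rw [hp]
    refine Submodule.sum_mem _ fun v hv => ?_
    have hv' : (monomial v (coeff v p) : MvPolynomial (Fin n) K) = coeff v p • monomial v 1 := by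
      rw [MvPolynomial.smul_monomial, smul_eq_mul, mul_one]
    rw [hv']
    exact Submodule.smul_mem _ _ (Submodule.subset_span ⟨v, h v hv, rfl⟩)

lemma spanMono_sup (E F : Set (Fin n →₀ ℕ)) :
    spanMono K E ⊔ spanMono K F = spanMono K (E ∪ F) := by
  rw [spanMono, spanMono, spanMono, Set.image_union, Submodule.span_union]

lemma mem_support_mul_mono {p : MvPolynomial (Fin n) K} {a m : Fin n →₀ ℕ} :
    m ∈ (p * monomial a (1 : K)).support ↔ a ≤ m ∧ m - a ∈ p.support := by
  rw [MvPolynomial.mem_support_iff, MvPolynomial.coeff_mul_monomial', mul_one]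
  split_ifs with h
  · simp [h, MvPolynomial.mem_support_iff]
  · simp [h]

lemma mul_mono_mem_spanMono {p : MvPolynomial (Fin n) K} {a : Fin n →₀ ℕ}
    {E : Set (Fin n →₀ ℕ)} :
    p * monomial a (1 : K) ∈ spanMono K E ↔ ∀ b ∈ p.support, a + b ∈ E := by
  rw [mem_spanMono]
  constructor
  · intro h b hb
    exact h (a + b) (mem_support_mul_mono.2 ⟨le_self_add, by rwa [add_tsub_cancel_left]⟩)
  · intro h m hm
    obtain ⟨hle, hsupp⟩ := mem_support_mul_mono.1 hm
    have := h _ hsupp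
    rwa [add_tsub_cancel_of_le hle] at this

lemma mono_mem_of_le {I : Ideal (MvPolynomial (Fin n) K)} {a e : Fin n →₀ ℕ}
    (h : (monomial a (1 : K) : MvPolynomial (Fin n) K) ∈ I) (hle : a ≤ e) :
    (monomial e (1 : K) : MvPolynomial (Fin n) K) ∈ I := by
  have he : (monomial e (1 : K) : MvPolynomial (Fin n) K)
      = monomial (e - a) (1 : K) * monomial a 1 := by
    rw [MvPolynomial.monomial_mul, tsub_add_cancel_of_le hle, one_mul]
  rw [he]
  exact Ideal.mul_mem_left _ _ h

def degF {n : ℕ} (e : Fin n →₀ ℕ) : ℕ := ∑ j, e j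

lemma degF_strictMono {a b : Fin n →₀ ℕ} (h : a < b) : degF a < degF b := by
  obtain ⟨hle, hne⟩ := lt_iff_le_and_ne.1 h
  have hj : ∃ j, a j ≠ b j := by
    by_contra hc; push_neg at hc; exact hne (Finsupp.ext hc)
  obtain ⟨j, hj⟩ := hj
  exact Finset.sum_lt_sum (fun i _ => Finsupp.le_def.1 hle i)
    ⟨j, Finset.mem_univ j, lt_of_le_of_ne (Finsupp.le_def.1 hle j) hj⟩


lemma exists_minGen {I : Ideal (MvPolynomial (Fin n) K)} {e : Fin n →₀ ℕ}
    (h : (monomial e (1 : K) : MvPolynomial (Fin n) K) ∈ I) :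
    ∃ a ∈ minGens (K := K) I, a ≤ e := by
  classical
  suffices H : ∀ N (e : Fin n →₀ ℕ), degF e ≤ N →
      (monomial e (1 : K) : MvPolynomial (Fin n) K) ∈ I →
      ∃ a ∈ minGens (K := K) I, a ≤ e from H (degF e) e le_rfl h
  intro N
  induction N using Nat.strong_induction_on with
  | _ N ih =>
    intro e hdeg he
    by_cases hall : ∀ b < e, (monomial b (1 : K) : MvPolynomial (Fin n) K) ∉ I
    · exact ⟨e, ⟨he, hall⟩, le_rfl⟩
    · push_neg at hall
      obtain ⟨b, hb, hbI⟩ := hall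
      have hdb : degF b < N := lt_of_lt_of_le (degF_strictMono hb) hdeg
      obtain ⟨a, ha, hab⟩ := ih (degF b) hdb b le_rfl hbI
      exact ⟨a, ha, hab.trans hb.le⟩

def meetF {n : ℕ} (e g : Fin n →₀ ℕ) : Fin n →₀ ℕ := e - (e - g)

lemma meetF_apply (e g : Fin n →₀ ℕ) (j : Fin n) : meetF e g j = min (e j) (g j) := by
  simp only [meetF, Finsupp.tsub_apply]
  omega

lemma meetF_le_left {e g : Fin n →₀ ℕ} : meetF e g ≤ e :=
  Finsupp.le_def.2 fun j => by rw [meetF_apply]; exact min_le_left _ _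

lemma meetF_le_right {e g : Fin n →₀ ℕ} : meetF e g ≤ g :=
  Finsupp.le_def.2 fun j => by rw [meetF_apply]; exact min_le_right _ _

lemma le_meetF {a e g : Fin n →₀ ℕ} (h1 : a ≤ e) (h2 : a ≤ g) : a ≤ meetF e g :=
  Finsupp.le_def.2 fun j => by
    rw [meetF_apply]; exact le_min (Finsupp.le_def.1 h1 j) (Finsupp.le_def.1 h2 j)

lemma meetF_mono_left {e e' g : Fin n →₀ ℕ} (h : e ≤ e') : meetF e g ≤ meetF e' g :=
  Finsupp.le_def.2 fun j => by
    rw [meetF_apply, meetF_apply]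
    exact min_le_min (Finsupp.le_def.1 h j) le_rfl

lemma isPrime_span_X (V : Finset (Fin n)) :
    (Ideal.span ((fun j => (X j : MvPolynomial (Fin n) K)) '' ↑V)).IsPrime := by
  classical
  set φ : MvPolynomial (Fin n) K →+* MvPolynomial (Fin n) K :=
    (aeval (R := K) fun j => if j ∈ V then (0 : MvPolynomial (Fin n) K) else X j).toRingHom with hφ
  have hφmono : ∀ (b : Fin n →₀ ℕ) (c : K),
      φ (monomial b c) = if ∀ i ∈ V, b i = 0 then monomial b c else 0 := by
    intro b c
    rw [hφ, AlgHom.toRingHom_eq_coe, RingHom.coe_coe, aeval_monomial]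
    split_ifs with hb
    · have : (b.prod fun i k => (if i ∈ V then (0 : MvPolynomial (Fin n) K) else X i) ^ k)
          = b.prod fun i k => (X i) ^ k := by
        apply Finsupp.prod_congr
        intro i hi
        have : i ∉ V := fun hiV => (Finsupp.mem_support_iff.1 hi) (hb i hiV)
        rw [if_neg this]
      rw [this, MvPolynomial.algebraMap_eq, ← MvPolynomial.monomial_eq]
    · push_neg at hb
      obtain ⟨i, hiV, hbi⟩ := hb
      have hi : i ∈ b.support := Finsupp.mem_support_iff.2 hbi
      rw [Finsupp.prod, Finset.prod_eq_zero hi (by rw [if_pos hiV]; exact zero_pow hbi)]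
      rw [mul_zero]
  have hker : Ideal.span ((fun j => (X j : MvPolynomial (Fin n) K)) '' ↑V) = RingHom.ker φ := by
    apply le_antisymm
    · rw [Ideal.span_le]
      rintro _ ⟨j, hj, rfl⟩
      have : φ (X j) = 0 := by
        rw [hφ]; simp only [AlgHom.toRingHom_eq_coe, RingHom.coe_coe, aeval_X]
        rw [if_pos (Finset.mem_coe.1 hj)]
      simpa [RingHom.mem_ker] using this
    · intro p hp
      rw [RingHom.mem_ker] at hp
      rw [mem_ideal_span_X_image]
      intro m hm
      by_contra hcon
      push_neg at hcon
      replace hcon : ∀ i ∈ V, m i = 0 := fun i hi => hcon i (Finset.mem_coe.2 hi)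
      have hφp : φ p = ∑ b ∈ p.support, φ (monomial b (coeff b p)) := by
        conv_lhs => rw [← support_sum_monomial_coeff p]
        exact map_sum φ _ _
      have hc : coeff m (φ p) = coeff m p := by
        rw [hφp, MvPolynomial.coeff_sum]
        rw [Finset.sum_eq_single_of_mem m hm]
        · rw [hφmono, if_pos hcon, coeff_monomial, if_pos rfl]
        · intro b hb hbm
          rw [hφmono]
          split_ifs with h2
          · rw [coeff_monomial, if_neg hbm]
          · simp
      rw [hp] at hc
      simp only [coeff_zero] at hc
      exact (MvPolynomial.mem_support_iff.1 hm) hc.symm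
  rw [hker]
  exact RingHom.ker_isPrime φ



lemma X_not_mem_span {V : Finset (Fin n)} {j : Fin n} (hj : j ∉ V) :
    (X j : MvPolynomial (Fin n) K) ∉
      Ideal.span ((fun j => (X j : MvPolynomial (Fin n) K)) '' ↑V) := by
  intro hmem
  rw [show ((fun j => (X j : MvPolynomial (Fin n) K)) '' ↑V)
      = (X '' ↑V : Set (MvPolynomial (Fin n) K)) from rfl, mem_ideal_span_X_image] at hmem
  obtain ⟨i, hiV, hne⟩ := hmem (Finsupp.single j 1) (by
    rw [MvPolynomial.support_X]; exact Finset.mem_singleton_self _)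
  have : i = j := by
    by_contra hij
    rw [Finsupp.single_apply, if_neg (Ne.symm hij)] at hne -- single j 1 i : careful
    exact hne rfl
  exact hj (this ▸ hiV)

lemma card_le_ringKrullDim_quot (V Z : Finset (Fin n)) (hdisj : ∀ j ∈ Z, j ∉ V) :
    ((Z.card : ℕ∞) : WithBot ℕ∞) ≤
      ringKrullDim
        (MvPolynomial (Fin n) K ⧸
          Ideal.span ((fun j => (X j : MvPolynomial (Fin n) K)) '' ↑V)) := by
  classical
  set P : Ideal (MvPolynomial (Fin n) K) :=
    Ideal.span ((fun j => (X j : MvPolynomial (Fin n) K)) '' ↑V) with hP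
  set zl : List (Fin n) := Z.toList with hzl
  have hlen : zl.length = Z.card := Finset.length_toList _
  have hnodup : zl.Nodup := Finset.nodup_toList _
  set Wk : ℕ → Finset (Fin n) := fun k => V ∪ (zl.take k).toFinset with hWk
  set Q : ℕ → Ideal (MvPolynomial (Fin n) K) :=
    fun k => Ideal.span ((fun j => (X j : MvPolynomial (Fin n) K)) '' ↑(Wk k)) with hQ
  have hPQ : ∀ k, P ≤ Q k := fun k =>
    Ideal.span_mono (Set.image_mono (by
      intro x hx; exact Finset.mem_coe.2 (Finset.mem_union_left _ (Finset.mem_coe.1 hx))))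
  have hQmono : ∀ k, Q k ≤ Q (k + 1) := by
    intro k
    apply Ideal.span_mono (Set.image_mono _)
    intro x hx
    rcases Finset.mem_union.1 (Finset.mem_coe.1 hx) with h | h
    · exact Finset.mem_coe.2 (Finset.mem_union_left _ h)
    · refine Finset.mem_coe.2 (Finset.mem_union_right _ ?_)
      rw [List.mem_toFinset] at h ⊢
      have : zl.take k = (zl.take (k+1)).take k := by
        rw [List.take_take]; congr 1; omega
      rw [this] at h
      exact List.take_subset _ _ h
  have hQstrict : ∀ k < Z.card, Q k < Q (k + 1) := by
    intro k hk
    have hk' : k < zl.length := by omega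
    set j := zl[k]'hk' with hj
    have hjZ : j ∈ Z := by
      rw [← Finset.mem_toList, ← hzl]; exact List.getElem_mem hk'
    have hjtake : j ∈ (zl.take (k+1)).toFinset := by
      rw [List.mem_toFinset, List.take_succ]
      refine List.mem_append.2 (Or.inr ?_)
      have : zl[k]? = some j := by
        rw [List.getElem?_eq_getElem hk']
      rw [this]
      exact List.mem_singleton_self j
    have hjntake : j ∉ (zl.take k).toFinset := by
      rw [List.mem_toFinset]
      intro hmem
      obtain ⟨i, hi, hij⟩ := List.mem_iff_getElem.1 hmem
      have hilen : i < k := by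
        have := hi; rw [List.length_take] at this; omega
      rw [List.getElem_take] at hij
      have := (List.Nodup.getElem_inj_iff hnodup).1 (hij.trans hj)
      omega
    refine lt_of_le_of_ne (hQmono k) ?_
    intro heq
    have hXj1 : (X j : MvPolynomial (Fin n) K) ∈ Q (k+1) :=
      Ideal.subset_span ⟨j, Finset.mem_coe.2 (Finset.mem_union_right _ hjtake), rfl⟩
    have hXj0 : (X j : MvPolynomial (Fin n) K) ∉ Q k := by
      apply X_not_mem_span
      intro hmem
      rcases Finset.mem_union.1 hmem with h | h
      · exact hdisj j hjZ h
      · exact hjntake h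
    exact hXj0 (heq ▸ hXj1)
  -- build LTSeries in PrimeSpectrum of the quotient
  have hker : RingHom.ker (Ideal.Quotient.mk P) = P := Ideal.mk_ker
  have hprime : ∀ k, (Ideal.map (Ideal.Quotient.mk P) (Q k)).IsPrime := by
    intro k
    have := isPrime_span_X (K := K) (Wk k)
    exact Ideal.map_isPrime_of_surjective Ideal.Quotient.mk_surjective
      (by rw [hker]; exact hPQ k)
  have hcomap : ∀ k, Ideal.comap (Ideal.Quotient.mk P) (Ideal.map (Ideal.Quotient.mk P) (Q k))
      = Q k := by
    intro k
    rw [Ideal.comap_map_of_surjective _ Ideal.Quotient.mk_surjective]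
    have : Ideal.comap (Ideal.Quotient.mk P) ⊥ = P := by
      rw [← RingHom.ker_eq_comap_bot, hker]
    rw [this]
    exact sup_eq_left.2 (hPQ k)
  let ser : LTSeries (PrimeSpectrum (MvPolynomial (Fin n) K ⧸ P)) :=
    { length := Z.card
      toFun := fun k => ⟨Ideal.map (Ideal.Quotient.mk P) (Q k), hprime k⟩
      step := by
        intro k
        have hk : (k : ℕ) < Z.card := k.isLt
        have hlt := hQstrict k hk
        have hle : Ideal.map (Ideal.Quotient.mk P) (Q k)
            ≤ Ideal.map (Ideal.Quotient.mk P) (Q (k+1)) := Ideal.map_mono hlt.le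
        show (_ : PrimeSpectrum (MvPolynomial (Fin n) K ⧸ P)) < _
        refine lt_of_le_of_ne ?_ ?_
        · exact hle
        · intro heq
          have : Ideal.map (Ideal.Quotient.mk P) (Q (k : ℕ))
              = Ideal.map (Ideal.Quotient.mk P) (Q ((k : ℕ)+1)) := by
            exact congrArg PrimeSpectrum.asIdeal heq
          have := congrArg (Ideal.comap (Ideal.Quotient.mk P)) this
          rw [hcomap, hcomap] at this
          exact hlt.ne this }
  have := Order.LTSeries.length_le_krullDim ser
  unfold ringKrullDim
  exact_mod_cast this


lemma main_bound (I J : Ideal (MvPolynomial (Fin n) K)) (hJI : J < I)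
    (g : Fin n →₀ ℕ)
    (hg : ∀ j : Fin n,
      IsGreatest {k | ∃ a ∈ minGens (K := K) I ∪ minGens (K := K) J, k = a j} (g j)) :
    ((sInf {k | ∃ c ∈ charPoset I J g, k = rho g c} : ℕ) : WithBot ℕ∞) ≤ fdepthQ I J := by
  classical
  have hgI : ∀ a ∈ minGens (K := K) I, a ≤ g := fun a ha =>
    Finsupp.le_def.2 fun j => (hg j).2 ⟨a, Or.inl ha, rfl⟩
  have hgJ : ∀ a ∈ minGens (K := K) J, a ≤ g := fun a ha =>
    Finsupp.le_def.2 fun j => (hg j).2 ⟨a, Or.inr ha, rfl⟩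
  have hcp : ∀ e ∈ expSet I J, meetF e g ∈ charPoset I J g := by
    intro e he
    obtain ⟨u, hu, hue⟩ := exists_minGen (I := I) he.1
    have hum : u ≤ meetF e g := le_meetF hue (hgI u hu)
    refine ⟨⟨mono_mem_of_le hu.1 hum, fun hJm => he.2 (mono_mem_of_le hJm meetF_le_left)⟩,
      meetF_le_right⟩
  have hfin : (charPoset I J g).Finite :=
    Set.Finite.subset (Set.finite_Icc 0 g)
      (fun c hc => Set.mem_Icc.2 ⟨zero_le, hc.2⟩)
  set l : List (Fin n →₀ ℕ) :=
    hfin.toFinset.toList.mergeSort (fun a b => decide (degF b ≤ degF a)) with hl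
  have hperm : l.Perm hfin.toFinset.toList := List.mergeSort_perm _ _
  have hnodup : l.Nodup := hperm.nodup_iff.2 (Finset.nodup_toList _)
  have hmem : ∀ c, c ∈ l ↔ c ∈ charPoset I J g := fun c => by
    rw [hperm.mem_iff, Finset.mem_toList, Set.Finite.mem_toFinset]
  have hsorted : l.Pairwise fun a b => degF b ≤ degF a := by
    have h := List.pairwise_mergeSort (le := fun a b => decide (degF b ≤ degF a))
      (fun a b c h1 h2 => by
        simp only [decide_eq_true_eq] at *; omega)
      (fun a b => by
        simp only [Bool.or_eq_true, decide_eq_true_eq]; omega)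
      hfin.toFinset.toList
    exact h.imp fun hab => by simpa using hab
  set m := l.length with hm
  set aa : Fin m → (Fin n →₀ ℕ) := fun s => l.get s with haa
  have hchar : ∀ s, aa s ∈ charPoset I J g := fun s => (hmem _).1 (l.get_mem _)
  have hanti : ∀ s s' : Fin m, s < s' → degF (aa s') ≤ degF (aa s) := by
    intro s s' hss
    exact List.pairwise_iff_get.1 hsorted s s' hss
  have hinj : Function.Injective aa := List.nodup_iff_injective_get.1 hnodup
  have hcover : ∀ c ∈ charPoset I J g, ∃ s : Fin m, aa s = c := by
    intro c hc
    obtain ⟨s, hs⟩ := List.mem_iff_get.1 ((hmem c).2 hc)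
    exact ⟨s, hs⟩
  have hidx : ∀ s s' : Fin m, aa s < aa s' → (s' : ℕ) < (s : ℕ) := by
    intro s s' hlt
    by_contra hcon
    push_neg at hcon
    have hne : s ≠ s' := fun h => lt_irrefl _ (h ▸ hlt)
    have hss : s < s' := lt_of_le_of_ne (by exact hcon) hne
    have h1 := hanti s s' hss
    have h2 := degF_strictMono hlt
    omega
  set M : ℕ → Set (Fin n →₀ ℕ) :=
    fun t => {e | e ∈ expSet I J ∧ ∃ s : Fin m, (s : ℕ) < t ∧ aa s = meetF e g} with hM
  set JE : Set (Fin n →₀ ℕ) :=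
    {a | (monomial a (1 : K) : MvPolynomial (Fin n) K) ∈ J} with hJE
  have hJspan : Jspan J = spanMono K JE := rfl
  have hWsup : ∀ t : ℕ, spanMono K (M t) ⊔ Jspan J = spanMono K (M t ∪ JE) := fun t => by
    rw [hJspan, spanMono_sup]
  have hstep : ∀ (t : ℕ) (b e : Fin n →₀ ℕ), b ∈ M t → b ≤ e →
      (monomial e (1 : K) : MvPolynomial (Fin n) K) ∉ J → e ∈ M t := by
    intro t b e hb hbe heJ
    obtain ⟨hbE, s, hst, hsb⟩ := hb
    have heE : e ∈ expSet I J := ⟨mono_mem_of_le hbE.1 hbe, heJ⟩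
    obtain ⟨s', hs'⟩ := hcover _ (hcp e heE)
    have h1 : aa s ≤ aa s' := by rw [hsb, hs']; exact meetF_mono_left hbe
    rcases eq_or_lt_of_le h1 with heq | hlt
    · exact ⟨heE, s, hst, by rw [heq, hs']⟩
    · exact ⟨heE, s', lt_trans (hidx s s' hlt) hst, hs'⟩
  have hstable : ∀ t : ℕ, IsSSubmoduleModJ J (spanMono K (M t)) := by
    intro t j p hp
    rw [hWsup t]
    have hXp : (X j : MvPolynomial (Fin n) K) * p
        = p * monomial (Finsupp.single j 1) (1 : K) := by
      rw [mul_comm]; rfl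
    rw [hXp, mul_mono_mem_spanMono]
    intro b hb
    have hbM : b ∈ M t := mem_spanMono.1 hp b hb
    by_cases hJm : (monomial (Finsupp.single j 1 + b) (1 : K) : MvPolynomial (Fin n) K) ∈ J
    · exact Or.inr hJm
    · exact Or.inl (hstep t b _ hbM le_add_self hJm)
  have hM0 : M ((0 : Fin (m + 1)) : ℕ) = ∅ := by
    ext e
    simp only [hM, Fin.val_zero, Set.mem_setOf_eq, Set.mem_empty_iff_false, iff_false]
    rintro ⟨-, s, hs, -⟩; omega
  have hMtop : M m = expSet I J := by
    ext e
    constructor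
    · exact fun h => h.1
    · intro he
      obtain ⟨s, hs⟩ := hcover _ (hcp e he)
      exact ⟨he, s, s.isLt, hs⟩
  set PP : Fin m → Ideal (MvPolynomial (Fin n) K) :=
    fun i => Ideal.span ((fun j => (X j : MvPolynomial (Fin n) K)) ''
      ↑(Finset.univ.filter fun j => ¬ aa i j = g j)) with hPP
  have hgen : ∀ i : Fin m, M ((i : ℕ) + 1)
      = M i ∪ {e | aa i ≤ e ∧ (monomial e (1 : K) : MvPolynomial (Fin n) K) ∉ J} := by
    intro i
    ext e
    constructor
    · rintro ⟨he, s, hs, hsm⟩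
      rcases Nat.lt_succ_iff_lt_or_eq.1 hs with h | h
      · exact Or.inl ⟨he, s, h, hsm⟩
      · refine Or.inr ⟨?_, he.2⟩
        have hsi : s = i := Fin.ext h
        rw [← hsi, hsm]; exact meetF_le_left
    · rintro (⟨he, s, hs, hsm⟩ | ⟨hae, heJ⟩)
      · exact ⟨he, s, Nat.lt_succ_of_lt hs, hsm⟩
      · have heE : e ∈ expSet I J := ⟨mono_mem_of_le (hchar i).1.1 hae, heJ⟩
        obtain ⟨s', hs'⟩ := hcover _ (hcp e heE)
        have h1 : aa i ≤ aa s' := by rw [hs']; exact le_meetF hae (hchar i).2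
        rcases eq_or_lt_of_le h1 with heq | hlt
        · exact ⟨heE, i, Nat.lt_succ_self _, by rw [heq, hs']⟩
        · exact ⟨heE, s', Nat.lt_succ_of_lt (hidx i s' hlt), hs'⟩
  have hann : ∀ (i : Fin m) (s : MvPolynomial (Fin n) K),
      s * monomial (aa i) (1 : K) ∈ spanMono K (M i) ⊔ Jspan J ↔ s ∈ PP i := by
    intro i s
    rw [hWsup, mul_mono_mem_spanMono, hPP]
    beta_reduce
    rw [mem_ideal_span_X_image]
    refine forall₂_congr fun b hb => ?_
    constructor
    · intro h
      by_contra hcon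
      push_neg at hcon
      have hb0 : ∀ j, aa i j ≠ g j → b j = 0 := by
        intro j hj
        exact hcon j (by simp [hj])
      have hmeq : meetF (aa i + b) g = aa i := by
        ext j
        rw [meetF_apply, Finsupp.add_apply]
        by_cases hj : aa i j = g j
        · rw [hj]; omega
        · rw [hb0 j hj]
          have := Finsupp.le_def.1 (hchar i).2 j
          omega
      rcases h with hMem | hJm
      · obtain ⟨-, s', hs', hsm⟩ := hMem
        rw [hmeq] at hsm
        have hsi : s' = i := hinj hsm
        rw [hsi] at hs'
        exact lt_irrefl _ hs'
      · obtain ⟨u, hu, hule⟩ := exists_minGen (I := J) hJm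
        have huc : u ≤ aa i := by rw [← hmeq]; exact le_meetF hule (hgJ u hu)
        exact absurd (mono_mem_of_le hu.1 huc) (hchar i).1.2
    · rintro ⟨j, hjV, hbj⟩
      have hj : aa i j ≠ g j := by simpa using hjV
      have hjlt : aa i j < g j := lt_of_le_of_ne (Finsupp.le_def.1 (hchar i).2 j) hj
      by_cases hJm : (monomial (aa i + b) (1 : K) : MvPolynomial (Fin n) K) ∈ J
      · exact Or.inr hJm
      · have heE : aa i + b ∈ expSet I J := ⟨mono_mem_of_le (hchar i).1.1 le_self_add, hJm⟩
        obtain ⟨s', hs'⟩ := hcover _ (hcp _ heE)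
        have h1 : aa i ≤ aa s' := by rw [hs']; exact le_meetF le_self_add (hchar i).2
        have hne : aa i ≠ aa s' := by
          intro heq
          have hcoord := congrArg (fun f : Fin n →₀ ℕ => f j) (heq.trans hs')
          simp only [meetF_apply, Finsupp.add_apply] at hcoord
          omega
        exact Or.inl ⟨heE, s', hidx i s' (lt_of_le_of_ne h1 hne), hs'⟩
  have hbot : spanMono K (M ((0 : Fin (m + 1)) : ℕ)) = ⊥ := by
    rw [hM0, spanMono]
    simp
  have htop : spanMono K (M ((Fin.last m : Fin (m + 1)) : ℕ)) = quotSpace I J := by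
    rw [Fin.val_last, hMtop]; rfl
  have hgenW : ∀ i : Fin m,
      spanMono K (M ((i.succ : Fin (m + 1)) : ℕ))
        = spanMono K (M ((i.castSucc : Fin (m + 1)) : ℕ)) ⊔
          spanMono K {e | aa i ≤ e ∧ (monomial e (1 : K) : MvPolynomial (Fin n) K) ∉ J} := by
    intro i
    rw [Fin.val_succ, Fin.coe_castSucc, hgen i, ← spanMono_sup]
  have hannW : ∀ (i : Fin m) (s : MvPolynomial (Fin n) K),
      s * monomial (aa i) (1 : K)
          ∈ spanMono K (M ((i.castSucc : Fin (m + 1)) : ℕ)) ⊔ Jspan J ↔ s ∈ PP i := by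
    intro i s
    rw [Fin.coe_castSucc]
    exact hann i s
  refine le_trans ?_
    (le_iSup (fun F : QPrimeFiltration I J => F.fdepth)
      ⟨m, fun t => spanMono K (M (t : ℕ)), aa, PP, hbot, htop, fun i => ⟨M (i : ℕ), rfl⟩,
        fun i => hstable (i : ℕ), fun i => (hchar i).1, hgenW, hannW,
        fun i => ⟨Finset.univ.filter fun j => ¬ aa i j = g j, rfl⟩⟩)
  show _ ≤ ⨅ i : Fin m, ringKrullDim (MvPolynomial (Fin n) K ⧸ PP i)
  refine le_iInf fun i => ?_
  have h1 : sInf {k | ∃ c ∈ charPoset I J g, k = rho g c} ≤ rho g (aa i) :=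
    Nat.sInf_le ⟨aa i, hchar i, rfl⟩
  have h2 : ((rho g (aa i) : ℕ∞) : WithBot ℕ∞)
      ≤ ringKrullDim (MvPolynomial (Fin n) K ⧸ PP i) := by
    have hdisj : ∀ j ∈ (Finset.univ.filter fun j => aa i j = g j),
        j ∉ (Finset.univ.filter fun j => ¬ aa i j = g j) := by
      intro j hj
      simp only [Finset.mem_filter, Finset.mem_univ, true_and] at *
      tauto
    have := card_le_ringKrullDim_quot (K := K)
      (Finset.univ.filter fun j => ¬ aa i j = g j)
      (Finset.univ.filter fun j => aa i j = g j) hdisj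
    rw [hPP]
    exact this
  refine le_trans ?_ h2
  exact WithBot.coe_le_coe.2 (ENat.coe_le_coe.2 h1)


end Aux

/-- **Proposition.** `fdepth I/J ≥ min {ρ(c) : c ∈ P_{I/J}}`, where `P_{I/J}` is the
characteristic poset taken with respect to `g` the join of the exponent vectors of the
minimal generators of `I` and `J`. In particular, for a squarefree monomial ideal `I`,
`fdepth I ≥ min {deg u : u ∈ G(I)}`. -/
theorem fdepth_ge_min_rho
    {n : ℕ} {K : Type} [Field K] (I J : Ideal (MvPolynomial (Fin n) K))
    (hI : IsMonomialIdeal I) (hJ : IsMonomialIdeal J) (hJI : J < I)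
    (g : Fin n →₀ ℕ)
    (hg : ∀ j : Fin n,
      IsGreatest {k | ∃ a ∈ minGens (K := K) I ∪ minGens (K := K) J, k = a j} (g j)) :
    ((sInf {k | ∃ c ∈ charPoset I J g, k = rho g c} : ℕ) : WithBot ℕ∞) ≤ fdepthQ I J ∧
    ∀ I' : Ideal (MvPolynomial (Fin n) K), IsMonomialIdeal I' → I' ≠ ⊥ →
      (∀ a ∈ minGens (K := K) I', ∀ j, a j ≤ 1) →
      ((sInf {k | ∃ a ∈ minGens (K := K) I', k = a.sum fun _ e => e} : ℕ) : WithBot ℕ∞) ≤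
        fdepthQ I' (⊥ : Ideal (MvPolynomial (Fin n) K)) := by
  constructor
  · exact main_bound I J hJI g hg
  · intro I' hI' hne hsf
    classical
    have hbotMG : minGens (K := K) (⊥ : Ideal (MvPolynomial (Fin n) K)) = ∅ := by
      ext a
      simp only [minGens, Set.mem_setOf_eq, Set.mem_empty_iff_false, iff_false, not_and]
      intro h
      exact absurd (one_ne_zero (α := K))
        (by simpa [MvPolynomial.monomial_eq_zero] using Ideal.mem_bot.1 h)
    have hIne : ∃ a, a ∈ minGens (K := K) I' := by
      obtain ⟨A, hA⟩ := hI'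
      obtain ⟨p, hpI, hp0⟩ := Submodule.exists_mem_ne_zero_of_ne_bot hne
      obtain ⟨b, hb⟩ := Finset.nonempty_iff_ne_empty.2
        (fun h => hp0 (MvPolynomial.support_eq_empty.1 h))
      have hmem : (monomial b (1 : K) : MvPolynomial (Fin n) K) ∈ I' := by
        rw [hA] at hpI ⊢
        obtain ⟨si, hsi, hsib⟩ := mem_ideal_span_monomial_image.1 hpI b hb
        exact mono_mem_of_le (Ideal.subset_span ⟨si, hsi, rfl⟩) hsib
      obtain ⟨a, ha, -⟩ := exists_minGen hmem
      exact ⟨a, ha⟩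
    obtain ⟨a0, ha0⟩ := hIne
    set g' : Fin n →₀ ℕ := Finsupp.equivFunOnFinite.symm
      (fun j => if ∃ a ∈ minGens (K := K) I', a j = 1 then 1 else 0) with hgdef
    have hg'app : ∀ j, g' j = if ∃ a ∈ minGens (K := K) I', a j = 1 then 1 else 0 :=
      fun j => rfl
    have hg'le : ∀ j, g' j ≤ 1 := fun j => by rw [hg'app]; split_ifs <;> omega
    have hub : ∀ a ∈ minGens (K := K) I', ∀ j, a j ≤ g' j := by
      intro a ha j
      have h1 : a j ≤ 1 := hsf a ha j
      rcases Nat.le_one_iff_eq_zero_or_eq_one.1 h1 with h | h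
      · omega
      · rw [hg'app, if_pos ⟨a, ha, h⟩]; omega
    have hg'g : ∀ j : Fin n, IsGreatest
        {k | ∃ a ∈ minGens (K := K) I'
          ∪ minGens (K := K) (⊥ : Ideal (MvPolynomial (Fin n) K)), k = a j} (g' j) := by
      intro j
      rw [hbotMG, Set.union_empty]
      constructor
      · by_cases hex : ∃ a ∈ minGens (K := K) I', a j = 1
        · obtain ⟨a, ha, haj⟩ := hex
          exact ⟨a, ha, by rw [hg'app, if_pos ⟨a, ha, haj⟩, haj]⟩
        · refine ⟨a0, ha0, ?_⟩
          rw [hg'app, if_neg hex]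
          rcases Nat.le_one_iff_eq_zero_or_eq_one.1 (hsf a0 ha0 j) with h | h
          · rw [h]
          · exact absurd ⟨a0, ha0, h⟩ hex
      · rintro k ⟨a, ha, rfl⟩
        exact hub a ha j
    have hmain := main_bound I' ⊥ (bot_lt_iff_ne_bot.2 hne) g' hg'g
    have hmono0 : (monomial a0 (1 : K) : MvPolynomial (Fin n) K)
        ∉ (⊥ : Ideal (MvPolynomial (Fin n) K)) := by
      rw [Ideal.mem_bot]
      intro h
      exact one_ne_zero (α := K) (by simpa [MvPolynomial.monomial_eq_zero] using h)
    have hcne : a0 ∈ charPoset I' ⊥ g' := ⟨⟨ha0.1, hmono0⟩, Finsupp.le_def.2 (hub a0 ha0)⟩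
    have hρmem : sInf {k | ∃ c ∈ charPoset I' ⊥ g', k = rho g' c}
        ∈ {k | ∃ c ∈ charPoset I' ⊥ g', k = rho g' c} :=
      Nat.sInf_mem ⟨_, a0, hcne, rfl⟩
    obtain ⟨c, hc, hceq⟩ := hρmem
    obtain ⟨u, hu, huc⟩ := exists_minGen (I := I') hc.1.1
    have husupp : u.support ⊆ Zset g' c := by
      intro j hj
      have h1 : u j ≠ 0 := Finsupp.mem_support_iff.1 hj
      have h2 : u j ≤ 1 := hsf u hu j
      have h4 : (1 : ℕ) ≤ c j := by
        have := Finsupp.le_def.1 huc j; omega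
      have h5 : c j ≤ g' j := Finsupp.le_def.1 hc.2 j
      have h6 : g' j ≤ 1 := hg'le j
      simp only [Zset, Finset.mem_filter, Finset.mem_univ, true_and]
      omega
    have hdeg : (u.sum fun _ e => e) = u.support.card := by
      have h1 : ∀ j ∈ u.support, u j = 1 := fun j hj => by
        have h2 := hsf u hu j
        have h3 := Finsupp.mem_support_iff.1 hj
        omega
      rw [Finsupp.sum, Finset.sum_congr rfl h1, Finset.sum_const, smul_eq_mul, mul_one]
    have hle1 : sInf {k | ∃ a ∈ minGens (K := K) I', k = a.sum fun _ e => e}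
        ≤ sInf {k | ∃ c ∈ charPoset I' ⊥ g', k = rho g' c} := by
      refine le_trans (Nat.sInf_le ⟨u, hu, rfl⟩) ?_
      rw [hceq, hdeg, rho]
      exact Finset.card_le_card husupp
    refine le_trans ?_ hmain
    rw [← WithBot.coe_natCast, ← WithBot.coe_natCast]
    exact WithBot.coe_le_coe.2 (ENat.coe_le_coe.2 hle1)


end StanleyPaper
end
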